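/- arXiv:2407.01051 — 8 statements merged into one kernel-verified Lean document; each statement's English description precedes it below -/
import Mathlib

section
/- Let H be a real inner product space, δ₁ ≥ 0, and let g₀,…,g_T and v₀,…,v_T be vectors in H with ‖g_k − v_k‖ ≤ δ₁ for all k. Define the partial sums q_j = Σ_{k=0}^{j} g_k for 0 ≤ j ≤ T. Suppose the orthogonality relations ⟨v_j, q_{j−1}⟩ = 0 hold for all 1 ≤ j ≤ T. Then ‖q_T‖ ≤ 3δ₁T + (Σ_{k=0}^{T} ‖g_k‖²)^{1/2}. -/
open scoped RealInnerProductSpace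

/-- Bound on the accumulated inexact-gradient sum in Nemirovski's CG method. -/
theorem cg_q_bound {H : Type*} [NormedAddCommGroup H] [InnerProductSpace ℝ H]
    (T : ℕ) (δ₁ : ℝ) (hδ₁ : 0 ≤ δ₁) (g v : ℕ → H)
    (hgv : ∀ k ≤ T, ‖g k - v k‖ ≤ δ₁)
    (q : ℕ → H) (hq : ∀ j, q j = ∑ k ∈ Finset.range (j + 1), g k)
    (horth : ∀ j, 1 ≤ j → j ≤ T → ⟪v j, q (j - 1)⟫ = 0) :
    ‖q T‖ ≤ 3 * δ₁ * T + Real.sqrt (∑ k ∈ Finset.range (T + 1), ‖g k‖ ^ 2) := by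
  set S : ℕ → ℝ := fun j => ∑ k ∈ Finset.range (j + 1), ‖g k‖ ^ 2 with hS
  have hSnn : ∀ j, 0 ≤ S j := fun j => Finset.sum_nonneg fun k _ => sq_nonneg _
  have key : ∀ j, j ≤ T → ‖q j‖ ≤ 3 * δ₁ * j + Real.sqrt (S j) := by
    intro j
    induction j with
    | zero =>
      intro _
      have hq0 : q 0 = g 0 := by simp [hq 0]
      have hS0 : S 0 = ‖g 0‖ ^ 2 := by simp [hS]
      rw [hq0, hS0, Real.sqrt_sq (norm_nonneg _)]
      simp
    | succ n ih =>
      intro hn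
      have hn' : n ≤ T := Nat.le_of_succ_le hn
      have ihn := ih hn'
      have hrec : q (n + 1) = q n + g (n + 1) := by
        rw [hq, hq, Finset.sum_range_succ]
      have hip : ⟪q n, g (n + 1)⟫ ≤ δ₁ * ‖q n‖ := by
        have h0 : ⟪v (n + 1), q n⟫ = 0 := by
          have := horth (n + 1) (Nat.succ_le_succ (Nat.zero_le n)) hn
          simpa using this
        have h0' : ⟪q n, v (n + 1)⟫ = 0 := by rw [real_inner_comm]; exact h0
        have heq : ⟪q n, g (n + 1)⟫ = ⟪q n, g (n + 1) - v (n + 1)⟫ := by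
          rw [inner_sub_right, h0']; ring
        rw [heq]
        calc ⟪q n, g (n + 1) - v (n + 1)⟫ ≤ ‖q n‖ * ‖g (n + 1) - v (n + 1)‖ :=
              real_inner_le_norm _ _
          _ ≤ ‖q n‖ * δ₁ :=
              mul_le_mul_of_nonneg_left (hgv (n + 1) hn) (norm_nonneg _)
          _ = δ₁ * ‖q n‖ := mul_comm _ _
      have hsq : ‖q (n + 1)‖ ^ 2 ≤ ‖q n‖ ^ 2 + 2 * δ₁ * ‖q n‖ + ‖g (n + 1)‖ ^ 2 := by
        rw [hrec, norm_add_sq_real]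
        nlinarith [hip]
      have hSrec : S (n + 1) = S n + ‖g (n + 1)‖ ^ 2 := by
        simp [hS, Finset.sum_range_succ]
      have hsr : Real.sqrt (S n) ^ 2 = S n := Real.sq_sqrt (hSnn n)
      have hsr' : Real.sqrt (S (n + 1)) ^ 2 = S (n + 1) := Real.sq_sqrt (hSnn (n + 1))
      have hmono : Real.sqrt (S n) ≤ Real.sqrt (S (n + 1)) :=
        Real.sqrt_le_sqrt (by nlinarith [sq_nonneg ‖g (n + 1)‖])
      have hq0 : (0:ℝ) ≤ ‖q n‖ := norm_nonneg _
      have hs0 : 0 ≤ Real.sqrt (S n) := Real.sqrt_nonneg _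
      have hnn : (0:ℝ) ≤ (n:ℝ) := Nat.cast_nonneg n
      have hB : (0:ℝ) ≤ 3 * δ₁ * ((n:ℝ) + 1) + Real.sqrt (S (n + 1)) := by positivity
      have hsqB : ‖q (n + 1)‖ ^ 2 ≤ (3 * δ₁ * ((n:ℝ) + 1) + Real.sqrt (S (n + 1))) ^ 2 := by
        nlinarith [ihn, hsq, hmono, hq0, hs0, hnn, hδ₁, hsr, hsr', hSrec,
          mul_nonneg hδ₁ hq0, mul_nonneg hδ₁ hs0, mul_nonneg (mul_nonneg hδ₁ hnn) hδ₁,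
          mul_nonneg hδ₁ hnn, sq_nonneg (Real.sqrt (S (n+1)) - Real.sqrt (S n)),
          mul_nonneg (sub_nonneg.mpr hmono) hs0,
          mul_nonneg (sub_nonneg.mpr hmono) (mul_nonneg hδ₁ hnn)]
      have : ‖q (n + 1)‖ ≤ 3 * δ₁ * ((n:ℝ) + 1) + Real.sqrt (S (n + 1)) := by
        nlinarith [norm_nonneg (q (n + 1)), hB, hsqB]
      simpa [Nat.cast_succ] using this
  simpa [hS] using key T le_rfl
end

section
/- Let H be a real inner product space, δ₁ ≥ 0, and let g₀,…,g_T and v₀,…,v_T be vectors in H with ‖g_k − v_k‖ ≤ δ₁ for all k. Define q_j = Σ_{k=0}^{j} g_k for 0 ≤ j ≤ T, and suppose ⟨v_j, q_{j−1}⟩ = 0 for all 1 ≤ j ≤ T. Then ‖q_T‖² ≤ Σ_{k=0}^{T} ‖g_k‖² + 2δ₁ Σ_{k=0}^{T−1} ‖q_k‖. -/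
open scoped RealInnerProductSpace

/-- Upper recursive bound on the accumulated inexact-gradient sum in Nemirovski's CG method. -/
theorem cg_q_sq_upper_bound {H : Type*} [NormedAddCommGroup H] [InnerProductSpace ℝ H]
    (T : ℕ) (δ₁ : ℝ) (hδ₁ : 0 ≤ δ₁) (g v : ℕ → H)
    (hgv : ∀ k ≤ T, ‖g k - v k‖ ≤ δ₁)
    (q : ℕ → H) (hq : ∀ j, q j = ∑ k ∈ Finset.range (j + 1), g k)
    (horth : ∀ j, 1 ≤ j → j ≤ T → ⟪v j, q (j - 1)⟫ = 0) :
    ‖q T‖ ^ 2 ≤ (∑ k ∈ Finset.range (T + 1), ‖g k‖ ^ 2)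
      + 2 * δ₁ * ∑ k ∈ Finset.range T, ‖q k‖ := by
  induction T with
  | zero =>
      simp [hq 0]
  | succ n ih =>
      have IH := ih (fun k hk => hgv k (hk.trans (Nat.le_succ n)))
        (fun j h1 h2 => horth j h1 (h2.trans (Nat.le_succ n)))
      have hstep : q (n + 1) = q n + g (n + 1) := by
        rw [hq, hq, Finset.sum_range_succ]
      have hinner : ⟪v (n + 1), q n⟫ = 0 := by
        have := horth (n + 1) (Nat.succ_le_succ (Nat.zero_le n)) le_rfl
        simpa using this
      have hexp : ‖q (n + 1)‖ ^ 2
          = ‖q n‖ ^ 2 + 2 * ⟪g (n + 1), q n⟫ + ‖g (n + 1)‖ ^ 2 := by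
        rw [hstep]
        rw [add_comm (q n) (g (n + 1))]
        rw [norm_add_sq_real]
        ring
      have hgq : ⟪g (n + 1), q n⟫ ≤ δ₁ * ‖q n‖ := by
        have : ⟪g (n + 1), q n⟫ = ⟪g (n + 1) - v (n + 1), q n⟫ := by
          rw [inner_sub_left, hinner]; ring
        rw [this]
        calc ⟪g (n + 1) - v (n + 1), q n⟫ ≤ ‖g (n + 1) - v (n + 1)‖ * ‖q n‖ :=
              real_inner_le_norm _ _
          _ ≤ δ₁ * ‖q n‖ := by
              apply mul_le_mul_of_nonneg_right (hgv (n + 1) le_rfl) (norm_nonneg _)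
      rw [hexp, Finset.sum_range_succ (fun k => ‖g k‖ ^ 2), Finset.sum_range_succ (fun k => ‖q k‖)]
      nlinarith [IH, hgq]
end

section
/- Let f : ℝⁿ → ℝ be differentiable and L-smooth (‖∇f(x) − ∇f(y)‖ ≤ L‖x − y‖ for all x, y, with L > 0). Let x ∈ ℝⁿ and let g ∈ ℝⁿ satisfy ‖g − ∇f(x)‖ ≤ δ₁ for some δ₁ ≥ 0. Then ‖g‖² ≤ 4L·(f(x) − f(x − (1/(2L))·g)) + 2δ₁². -/
open InnerProductSpace

variable {n : ℕ}

lemma line_deriv (f : EuclideanSpace ℝ (Fin n) → ℝ) (hf : Differentiable ℝ f)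
    (x v : EuclideanSpace ℝ (Fin n)) (t : ℝ) :
    HasDerivAt (fun s : ℝ => f (x + s • v)) (inner ℝ (gradient f (x + t • v)) v : ℝ) t := by
  have hc : HasDerivAt (fun s : ℝ => x + s • v) v t := by
    simpa using ((hasDerivAt_id t).smul_const v).const_add x
  have hgrad := (hf (x + t • v)).hasGradientAt
  have hfd : HasFDerivAt f (toDualMap ℝ _ (gradient f (x + t • v))) (x + t • v) := hgrad
  exact hfd.comp_hasDerivAt t hc

/-- descent lemma -/
lemma descent (f : EuclideanSpace ℝ (Fin n) → ℝ) (L : ℝ) (hL : 0 < L)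
    (hf : Differentiable ℝ f)
    (hsmooth : ∀ x y, ‖gradient f x - gradient f y‖ ≤ L * ‖x - y‖)
    (x v : EuclideanSpace ℝ (Fin n)) :
    f (x + v) ≤ f x + inner ℝ (gradient f x) v + L / 2 * ‖v‖ ^ 2 := by
  set ψ : ℝ → ℝ := fun t => f (x + t • v) - t * inner ℝ (gradient f x) v - L / 2 * t ^ 2 * ‖v‖ ^ 2
    with hψ
  have hψd : ∀ t : ℝ, HasDerivAt ψ
      ((inner ℝ (gradient f (x + t • v)) v : ℝ) - inner ℝ (gradient f x) v - L * t * ‖v‖ ^ 2) t := by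
    intro t
    have h1 := line_deriv f hf x v t
    have h2 : HasDerivAt (fun s : ℝ => s * (inner ℝ (gradient f x) v : ℝ))
        (inner ℝ (gradient f x) v : ℝ) t := by
      simpa using (hasDerivAt_id t).mul_const (inner ℝ (gradient f x) v : ℝ)
    have h3 : HasDerivAt (fun s : ℝ => L / 2 * s ^ 2 * ‖v‖ ^ 2)
        (L * t * ‖v‖ ^ 2) t := by
      have := ((hasDerivAt_pow 2 t).const_mul (L / 2)).mul_const (‖v‖ ^ 2)
      exact this.congr_deriv (by push_cast; ring)
    exact (h1.sub h2).sub h3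
  have hmono : ψ 1 ≤ ψ 0 := by
    have : AntitoneOn ψ (Set.Icc 0 1) := by
      apply antitoneOn_of_deriv_nonpos (convex_Icc 0 1)
      · exact Continuous.continuousOn (by
          have : Differentiable ℝ ψ := fun t => (hψd t).differentiableAt
          exact this.continuous)
      · intro t ht
        exact (hψd t).differentiableAt.differentiableWithinAt
      · intro t ht
        rw [interior_Icc] at ht
        rw [(hψd t).deriv]
        have hb : (inner ℝ (gradient f (x + t • v)) v : ℝ) - inner ℝ (gradient f x) v
            ≤ L * t * ‖v‖ ^ 2 := by
          have := real_inner_le_norm (gradient f (x + t • v) - gradient f x) v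
          have h2 := hsmooth (x + t • v) x
          have hx : ‖x + t • v - x‖ = t * ‖v‖ := by
            simp [norm_smul, abs_of_pos ht.1]
          rw [inner_sub_left] at this
          rw [hx] at h2
          nlinarith [norm_nonneg v, mul_le_mul_of_nonneg_right h2 (norm_nonneg v)]
        linarith
    exact this (by norm_num) (by norm_num) zero_le_one
  have h0 : ψ 0 = f x := by simp [hψ]
  have h1 : ψ 1 = f (x + v) - inner ℝ (gradient f x) v - L / 2 * ‖v‖ ^ 2 := by simp [hψ]
  rw [h0, h1] at hmono
  linarith

/-- Inexact-gradient descent inequality for the step of size `1/(2L)`. -/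
theorem inexact_gradient_descent_step (n : ℕ) (f : EuclideanSpace ℝ (Fin n) → ℝ)
    (L δ₁ : ℝ) (hL : 0 < L) (hδ₁ : 0 ≤ δ₁)
    (hf : Differentiable ℝ f)
    (hsmooth : ∀ x y, ‖gradient f x - gradient f y‖ ≤ L * ‖x - y‖)
    (x g : EuclideanSpace ℝ (Fin n))
    (hg : ‖g - gradient f x‖ ≤ δ₁) :
    ‖g‖ ^ 2 ≤ 4 * L * (f x - f (x - (1 / (2 * L)) • g)) + 2 * δ₁ ^ 2 := by
  have hd := descent f L hL hf hsmooth x (-((1 / (2 * L)) • g))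
  have hxe : x + -((1 / (2 * L)) • g) = x - (1 / (2 * L)) • g := by abel
  rw [hxe] at hd
  have hinner : (inner ℝ (gradient f x) (-((1 / (2 * L)) • g)) : ℝ)
      = -(1 / (2 * L)) * inner ℝ (gradient f x) g := by
    rw [inner_neg_right, real_inner_smul_right]; ring
  have hnorm : ‖-((1 / (2 * L)) • g)‖ ^ 2 = (1 / (2 * L)) ^ 2 * ‖g‖ ^ 2 := by
    rw [norm_neg, norm_smul, Real.norm_eq_abs,
      abs_of_pos (by positivity : (0:ℝ) < 1 / (2 * L)), mul_pow]
  rw [hinner, hnorm] at hd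
  -- inner bound
  have hib : (inner ℝ (gradient f x) g : ℝ) ≥ ‖g‖ ^ 2 - δ₁ * ‖g‖ := by
    have h1 : (inner ℝ (gradient f x - g) g : ℝ) ≥ -(δ₁ * ‖g‖) := by
      have := real_inner_le_norm (g - gradient f x) g
      have h2 : (inner ℝ (g - gradient f x) g : ℝ) ≤ δ₁ * ‖g‖ :=
        this.trans (mul_le_mul_of_nonneg_right hg (norm_nonneg g))
      have : (inner ℝ (gradient f x - g) g : ℝ) = -(inner ℝ (g - gradient f x) g : ℝ) := by
        rw [← inner_neg_left]; congr 1; abel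
      linarith [this ▸ neg_le_neg h2]
    have : (inner ℝ (gradient f x) g : ℝ) = inner ℝ (gradient f x - g) g + ‖g‖ ^ 2 := by
      rw [inner_sub_left, real_inner_self_eq_norm_sq]; ring
    linarith
  have hLne : L ≠ 0 := ne_of_gt hL
  have hsq : 0 ≤ (‖g‖ - 2 * δ₁) ^ 2 := sq_nonneg _
  have hid : L / 2 * ((1 / (2 * L)) ^ 2 * ‖g‖ ^ 2) = ‖g‖ ^ 2 / (8 * L) := by
    field_simp; ring
  rw [hid] at hd
  -- hd : f (x - ...) ≤ f x + -(1/(2L)) * inner + ‖g‖²/(8L)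
  have key : f x - f (x - (1 / (2 * L)) • g) ≥ 1 / (2 * L) * inner ℝ (gradient f x) g
      - ‖g‖ ^ 2 / (8 * L) := by linarith
  have h4L : 4 * L * (f x - f (x - (1 / (2 * L)) • g))
      ≥ 2 * (inner ℝ (gradient f x) g : ℝ) - ‖g‖ ^ 2 / 2 := by
    have := mul_le_mul_of_nonneg_left key (by positivity : (0:ℝ) ≤ 4 * L)
    have he : 4 * L * (1 / (2 * L) * (inner ℝ (gradient f x) g : ℝ) - ‖g‖ ^ 2 / (8 * L))
        = 2 * (inner ℝ (gradient f x) g : ℝ) - ‖g‖ ^ 2 / 2 := by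
      field_simp; ring
    linarith [he ▸ this]
  nlinarith [hib, hsq]
end

section
/- Let f : ℝⁿ → ℝ be differentiable and γ-quasar-convex with respect to a minimizer x* for γ ∈ (0,1], i.e. f(x*) ≥ f(x) + (1/γ)⟨∇f(x), x* − x⟩ for all x. Let x₀, x̂ ∈ ℝⁿ satisfy the orthogonality relation ⟨∇f(x̂), x̂ − x₀⟩ = 0, and let g ∈ ℝⁿ satisfy ‖g − ∇f(x̂)‖ ≤ δ₁ for some δ₁ ≥ 0. Then f(x̂) − f(x*) ≤ (1/γ)⟨g, x₀ − x*⟩ + (δ₁/γ)‖x₀ − x*‖. -/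
open scoped RealInnerProductSpace

/-- Per-iteration quasar-convexity bound with orthogonality and inexact gradient
in Nemirovski's CG method. -/
theorem quasar_convex_orthogonality_bound (n : ℕ) (f : EuclideanSpace ℝ (Fin n) → ℝ)
    (γ δ₁ : ℝ) (hγ0 : 0 < γ) (hγ1 : γ ≤ 1) (hδ₁ : 0 ≤ δ₁)
    (hf : Differentiable ℝ f)
    (xstar : EuclideanSpace ℝ (Fin n)) (hmin : ∀ x, f xstar ≤ f x)
    (hquasar : ∀ x, f x + (1 / γ) * ⟪gradient f x, xstar - x⟫ ≤ f xstar)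
    (x₀ xhat g : EuclideanSpace ℝ (Fin n))
    (horth : ⟪gradient f xhat, xhat - x₀⟫ = 0)
    (hg : ‖g - gradient f xhat‖ ≤ δ₁) :
    f xhat - f xstar ≤ (1 / γ) * ⟪g, x₀ - xstar⟫ + (δ₁ / γ) * ‖x₀ - xstar‖ := by
  have h1 := hquasar xhat
  set G := gradient f xhat
  have hsplit : ⟪G, xhat - xstar⟫ = ⟪G, xhat - x₀⟫ + ⟪G, x₀ - xstar⟫ := by
    rw [← inner_add_right]
    congr 1
    abel
  have hG : ⟪G, x₀ - xstar⟫ = ⟪g, x₀ - xstar⟫ - ⟪g - G, x₀ - xstar⟫ := by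
    rw [inner_sub_left]; ring
  have hcs : ⟪g - G, x₀ - xstar⟫ ≥ -(δ₁ * ‖x₀ - xstar‖) := by
    have := abs_real_inner_le_norm (g - G) (x₀ - xstar)
    have h2 : ‖g - G‖ * ‖x₀ - xstar‖ ≤ δ₁ * ‖x₀ - xstar‖ :=
      mul_le_mul_of_nonneg_right hg (norm_nonneg _)
    nlinarith [abs_le.mp this]
  have hkey : ⟪G, xhat - xstar⟫ ≤ ⟪g, x₀ - xstar⟫ + δ₁ * ‖x₀ - xstar‖ := by
    rw [hsplit, horth, hG]; linarith
  have hneg : ⟪G, xstar - xhat⟫ = -⟪G, xhat - xstar⟫ := by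
    rw [← inner_neg_right]; congr 1; abel
  have hγinv : 0 ≤ 1 / γ := by positivity
  have h3 : f xhat - f xstar ≤ (1 / γ) * ⟪G, xhat - xstar⟫ := by
    rw [hneg] at h1; linarith
  calc f xhat - f xstar ≤ (1 / γ) * ⟪G, xhat - xstar⟫ := h3
    _ ≤ (1 / γ) * (⟪g, x₀ - xstar⟫ + δ₁ * ‖x₀ - xstar‖) :=
        mul_le_mul_of_nonneg_left hkey hγinv
    _ = (1 / γ) * ⟪g, x₀ - xstar⟫ + (δ₁ / γ) * ‖x₀ - xstar‖ := by ring
end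

section
/- Let f : ℝⁿ → ℝ be differentiable and L-smooth, let g : ℝⁿ → ℝⁿ satisfy ‖g(x) − ∇f(x)‖ ≤ δ₁ for all x (δ₁ ≥ 0), let f* = inf f > −∞, and let x̂₀, x̂₁, …, x̂_T be points satisfying f(x̂_{k+1}) ≤ f(x̂_k − (1/(2L))·g(x̂_k)) for all 0 ≤ k < T. Then Σ_{k=0}^{T−1} ‖g(x̂_k)‖² ≤ 4L·(f(x̂₀) − f*) + 2T·δ₁². -/
open scoped RealInnerProductSpace

/-- Descent lemma for L-smooth functions. -/
lemma descent_lemma_aux {E : Type*} [NormedAddCommGroup E] [InnerProductSpace ℝ E]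
    [CompleteSpace E]
    (f : E → ℝ) (L : ℝ) (hf : Differentiable ℝ f)
    (hs : ∀ x y, ‖gradient f x - gradient f y‖ ≤ L * ‖x - y‖) (x v : E) :
    f (x + v) ≤ f x + ⟪gradient f x, v⟫ + L / 2 * ‖v‖ ^ 2 := by
  set c : ℝ := ⟪gradient f x, v⟫ with hc
  set b : ℝ := L / 2 * ‖v‖ ^ 2 with hb
  set φ : ℝ → ℝ := fun t => f (x + t • v) - t * c - b * t ^ 2 with hφ
  have hφd : ∀ t : ℝ, HasDerivAt φ (⟪gradient f (x + t • v), v⟫ - c - b * (2 * t)) t := by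
    intro t
    have hline : HasDerivAt (fun t : ℝ => x + t • v) v t := by
      simpa using ((hasDerivAt_id t).smul_const v).const_add x
    have h1 : HasDerivAt (fun t : ℝ => f (x + t • v)) (⟪gradient f (x + t • v), v⟫) t := by
      have := ((hf (x + t • v)).hasGradientAt.hasFDerivAt).comp_hasDerivAt t hline
      exact this
    have h2 : HasDerivAt (fun t : ℝ => t * c) c t := by
      simpa using (hasDerivAt_id t).mul_const c
    have h3 : HasDerivAt (fun t : ℝ => b * t ^ 2) (b * (2 * t)) t := by
      simpa [mul_comm] using (hasDerivAt_pow 2 t).const_mul b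
    exact (h1.sub h2).sub h3
  have hmono : AntitoneOn φ (Set.Icc (0:ℝ) 1) := by
    apply antitoneOn_of_deriv_nonpos (convex_Icc 0 1)
    · exact Continuous.continuousOn (continuous_iff_continuousAt.mpr
        fun t => (hφd t).differentiableAt.continuousAt)
    · intro t _; exact (hφd t).differentiableAt.differentiableWithinAt
    · intro t ht
      rw [interior_Icc] at ht
      rw [(hφd t).deriv]
      have h1 : ⟪gradient f (x + t • v), v⟫ - c = ⟪gradient f (x + t • v) - gradient f x, v⟫ := by
        rw [inner_sub_left]
      rw [h1]
      have h2 : ⟪gradient f (x + t • v) - gradient f x, v⟫ ≤ L * t * ‖v‖ ^ 2 := by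
        calc ⟪gradient f (x + t • v) - gradient f x, v⟫
            ≤ ‖gradient f (x + t • v) - gradient f x‖ * ‖v‖ := real_inner_le_norm _ _
          _ ≤ (L * ‖(x + t • v) - x‖) * ‖v‖ := by
              apply mul_le_mul_of_nonneg_right (hs _ _) (norm_nonneg v)
          _ = L * t * ‖v‖ ^ 2 := by
              simp [norm_smul, abs_of_pos ht.1]; ring
      have : b * (2 * t) = L * t * ‖v‖ ^ 2 := by rw [hb]; ring
      linarith
  have := hmono (Set.mem_Icc.mpr ⟨le_refl 0, zero_le_one⟩)
    (Set.mem_Icc.mpr ⟨zero_le_one, le_refl 1⟩) zero_le_one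
  simp only [hφ, one_smul, zero_smul, add_zero, one_mul, one_pow, zero_pow, mul_zero,
    mul_one, zero_mul, sub_zero] at this
  linarith

/-- Telescoped inexact-gradient descent inequality along iterates dominated by
gradient-step points. -/
theorem telescoped_inexact_descent (n : ℕ) (f : EuclideanSpace ℝ (Fin n) → ℝ)
    (L δ₁ fstar : ℝ) (hL : 0 < L) (hδ₁ : 0 ≤ δ₁)
    (hf : Differentiable ℝ f)
    (hsmooth : ∀ x y, ‖gradient f x - gradient f y‖ ≤ L * ‖x - y‖)
    (g : EuclideanSpace ℝ (Fin n) → EuclideanSpace ℝ (Fin n))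
    (hg : ∀ x, ‖g x - gradient f x‖ ≤ δ₁)
    (hfstar : IsGLB (Set.range f) fstar)
    (T : ℕ) (xhat : ℕ → EuclideanSpace ℝ (Fin n))
    (hdesc : ∀ k < T, f (xhat (k + 1)) ≤ f (xhat k - (1 / (2 * L)) • g (xhat k))) :
    ∑ k ∈ Finset.range T, ‖g (xhat k)‖ ^ 2
      ≤ 4 * L * (f (xhat 0) - fstar) + 2 * (T : ℝ) * δ₁ ^ 2 := by
  -- per-step inequality
  have hstep : ∀ k < T, ‖g (xhat k)‖ ^ 2 ≤ 4 * L * (f (xhat k) - f (xhat (k + 1))) + 2 * δ₁ ^ 2 := by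
    intro k hk
    set x := xhat k
    set v := -((1 / (2 * L)) • g x) with hv
    have hstep' : xhat k - (1 / (2 * L)) • g x = x + v := by
      rw [hv]; abel
    have hd := descent_lemma_aux f L hf hsmooth x v
    have hdk := hdesc k hk
    rw [hstep'] at hdk
    have key : f (xhat (k+1)) ≤ f x + ⟪gradient f x, v⟫ + L / 2 * ‖v‖ ^ 2 := hdk.trans hd
    have hnv : ‖v‖ = (1 / (2 * L)) * ‖g x‖ := by
      rw [hv, norm_neg, norm_smul, Real.norm_eq_abs, abs_of_pos (by positivity)]
    have hinner : ⟪gradient f x, v⟫ = -(1 / (2 * L)) * ⟪gradient f x, g x⟫ := by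
      rw [hv, inner_neg_right, real_inner_smul_right]; ring
    have hsplit : ⟪gradient f x, g x⟫ = ‖g x‖ ^ 2 - ⟪g x - gradient f x, g x⟫ := by
      rw [inner_sub_left, real_inner_self_eq_norm_sq]; ring
    have hcs : ⟪g x - gradient f x, g x⟫ ≤ δ₁ * ‖g x‖ :=
      (real_inner_le_norm _ _).trans
        (mul_le_mul_of_nonneg_right (hg x) (norm_nonneg _))
    have hinner2 : ⟪gradient f x, g x⟫ ≥ ‖g x‖ ^ 2 - δ₁ * ‖g x‖ := by
      rw [hsplit]; linarith
    -- combine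
    have hLpos : (0:ℝ) < 2 * L := by linarith
    have hnv2 : ‖v‖ ^ 2 = (1 / (2 * L)) ^ 2 * ‖g x‖ ^ 2 := by rw [hnv]; ring
    have key2 : f (xhat (k+1)) ≤ f x - (1 / (2 * L)) * (‖g x‖ ^ 2 - δ₁ * ‖g x‖)
        + L / 2 * ((1 / (2 * L)) ^ 2 * ‖g x‖ ^ 2) := by
      rw [hinner, hnv2] at key
      have : -(1 / (2 * L)) * ⟪gradient f x, g x⟫ ≤ -(1 / (2 * L)) * (‖g x‖ ^ 2 - δ₁ * ‖g x‖) := by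
        apply mul_le_mul_of_nonpos_left hinner2
        have : (0:ℝ) < 1 / (2 * L) := by positivity
        linarith
      linarith
    have hsq : (0:ℝ) ≤ (‖g x‖ - 2 * δ₁) ^ 2 := sq_nonneg _
    have hL2 : L / 2 * ((1 / (2 * L)) ^ 2) = 1 / (8 * L) := by
      field_simp; ring
    -- 4L(f x - f x⁺) ≥ 2⟪⟫-type bound ⇒ result
    have expand : 4 * L * (f x - f (xhat (k+1))) ≥
        4 * L * ((1 / (2 * L)) * (‖g x‖ ^ 2 - δ₁ * ‖g x‖) - 1 / (8 * L) * ‖g x‖ ^ 2) := by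
      have := key2
      rw [show L / 2 * ((1 / (2 * L)) ^ 2 * ‖g x‖ ^ 2) = 1 / (8 * L) * ‖g x‖ ^ 2 by
        rw [← mul_assoc, hL2]] at this
      nlinarith
    have hc1 : 4 * L * ((1 / (2 * L)) * (‖g x‖ ^ 2 - δ₁ * ‖g x‖) - 1 / (8 * L) * ‖g x‖ ^ 2)
        = 2 * (‖g x‖ ^ 2 - δ₁ * ‖g x‖) - (1/2) * ‖g x‖ ^ 2 := by
      field_simp; ring
    rw [hc1] at expand
    nlinarith
  -- telescoping by induction
  have htel : ∀ m ≤ T, ∑ k ∈ Finset.range m, ‖g (xhat k)‖ ^ 2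
      ≤ 4 * L * (f (xhat 0) - f (xhat m)) + 2 * (m : ℝ) * δ₁ ^ 2 := by
    intro m hm
    induction m with
    | zero => simp
    | succ m ih =>
      have hmT : m < T := hm
      have := ih (le_of_lt hmT)
      rw [Finset.sum_range_succ]
      have hs := hstep m hmT
      push_cast
      linarith
  have hTf := htel T le_rfl
  have hlb : fstar ≤ f (xhat T) := hfstar.1 (Set.mem_range_self _)
  nlinarith
end

section
/- Let T ≥ 0, δ₁ ≥ 0, ε₀ > 0, R ≥ 0, L > 0, μ > 0 be real numbers, let β ∈ (0,1), γ ∈ (0,1], and let c ≥ (1/γ)(R + 3√(2ε₀/μ)). If T·γ·β·ε₀ + δ₁·T·(cγ − R) ≤ (3δ₁T + 2√(L(1−β)ε₀))·√(2ε₀/μ), then T ≤ (2/(γβ))·√(2(1−β)L/μ). -/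
/-- Resolution of the bound on the number of iterations of Nemirovski's CG method. -/
theorem cg_iteration_count_bound (T δ₁ ε₀ R L μ β γ c : ℝ)
    (hT : 0 ≤ T) (hδ₁ : 0 ≤ δ₁) (hε₀ : 0 < ε₀) (hR : 0 ≤ R) (hL : 0 < L) (hμ : 0 < μ)
    (hβ0 : 0 < β) (hβ1 : β < 1) (hγ0 : 0 < γ) (hγ1 : γ ≤ 1)
    (hc : (1 / γ) * (R + 3 * Real.sqrt (2 * ε₀ / μ)) ≤ c)
    (h : T * γ * β * ε₀ + δ₁ * T * (c * γ - R)
        ≤ (3 * δ₁ * T + 2 * Real.sqrt (L * (1 - β) * ε₀)) * Real.sqrt (2 * ε₀ / μ)) :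
    T ≤ (2 / (γ * β)) * Real.sqrt (2 * (1 - β) * L / μ) := by
  set s := Real.sqrt (2 * ε₀ / μ) with hs
  have hs0 : 0 ≤ s := Real.sqrt_nonneg _
  have hcγ : R + 3 * s ≤ c * γ := by
    have := mul_le_mul_of_nonneg_right hc hγ0.le
    rw [one_div, inv_mul_eq_div, div_mul_cancel₀] at this
    · exact this
    · exact hγ0.ne'
  -- δ₁ T (cγ - R) ≥ 3 δ₁ T s
  have key : T * γ * β * ε₀ ≤ 2 * Real.sqrt (L * (1 - β) * ε₀) * s := by
    have h1 : 3 * δ₁ * T * s ≤ δ₁ * T * (c * γ - R) := by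
      have : 3 * s ≤ c * γ - R := by linarith
      have := mul_le_mul_of_nonneg_left this (mul_nonneg hδ₁ hT)
      nlinarith [this]
    nlinarith [h]
  -- rewrite RHS
  have hprod : Real.sqrt (L * (1 - β) * ε₀) * s = ε₀ * Real.sqrt (2 * (1 - β) * L / μ) := by
    rw [hs, ← Real.sqrt_mul (mul_nonneg (mul_nonneg hL.le (by linarith)) hε₀.le)]
    rw [show L * (1 - β) * ε₀ * (2 * ε₀ / μ) = ε₀ ^ 2 * (2 * (1 - β) * L / μ) by ring]
    rw [Real.sqrt_mul (by positivity), Real.sqrt_sq hε₀.le]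
  have key2 : T * γ * β * ε₀ ≤ 2 * ε₀ * Real.sqrt (2 * (1 - β) * L / μ) := by
    calc T * γ * β * ε₀ ≤ 2 * Real.sqrt (L * (1 - β) * ε₀) * s := key
    _ = 2 * ε₀ * Real.sqrt (2 * (1 - β) * L / μ) := by rw [mul_assoc, hprod]; ring
  rw [div_mul_eq_mul_div, le_div_iff₀ (by positivity)]
  nlinarith [key2, hε₀, Real.sqrt_nonneg (2 * (1 - β) * L / μ)]
end

section
/- Let f : ℝⁿ → ℝ be differentiable, L-smooth and γ-quasar-convex with respect to a minimizer x* (γ ∈ (0,1]), satisfying the quadratic growth condition f(x) − f* ≥ (μ/2)‖x − x*‖² with μ > 0, where f* = f(x*). Let g : ℝⁿ → ℝⁿ satisfy ‖g(x) − ∇f(x)‖ ≤ δ₁ for all x (δ₁ ≥ 0). Let the Nemirovski Conjugate Gradient method generate from x₀: q₋₁ = 0, x̂_k an exact minimizer of f over the affine subspace x₀ + span(x_k − x₀, q_{k−1}), x_{k+1} = x̂_k − (1/(2L))·g(x̂_k), q_k = q_{k−1} + g(x̂_k), and suppose ‖g(x̂_k)‖ ≥ 2δ₁ at every iteration. Then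 for any β ∈ (0,1), after T = ⌈(2/(γβ))·√(2(1−β)L/μ)⌉ iterations, f(x_T) − f* ≤ β·ε₀ + (4/γ)·√(2ε₀/μ)·δ₁, where ε₀ = f(x₀) − f*. -/
open scoped RealInnerProductSpace

section Aux

variable {E : Type*} [NormedAddCommGroup E] [InnerProductSpace ℝ E] [CompleteSpace E]

private lemma cg_dir_deriv (f : E → ℝ) (hf : Differentiable ℝ f) (c v : E) (t : ℝ) :
    HasDerivAt (fun s : ℝ => f (c + s • v)) ⟪gradient f (c + t • v), v⟫ t := by
  have hline : HasDerivAt (fun s : ℝ => c + s • v) v t := by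
    simpa using ((hasDerivAt_id t).smul_const v).const_add c
  have hfd := (hf (c + t • v)).hasGradientAt.hasFDerivAt
  have := hfd.comp_hasDerivAt t hline
  simpa [InnerProductSpace.toDual_apply_apply, Function.comp_def] using this

private lemma cg_orth_of_min (f : E → ℝ) (hf : Differentiable ℝ f) (c v : E)
    (hmin : ∀ t : ℝ, f c ≤ f (c + t • v)) : ⟪gradient f c, v⟫ = 0 := by
  have hloc : IsLocalMin (fun t : ℝ => f (c + t • v)) 0 :=
    Filter.Eventually.of_forall fun t => by simpa using hmin t
  have hd : HasDerivAt (fun s : ℝ => f (c + s • v)) ⟪gradient f (c + (0:ℝ) • v), v⟫ 0 :=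
    cg_dir_deriv f hf c v 0
  have := hloc.hasDerivAt_eq_zero hd
  simpa using this

private lemma cg_descent (f : E → ℝ) (L : ℝ) (hL : 0 < L) (hf : Differentiable ℝ f)
    (hsmooth : ∀ x y, ‖gradient f x - gradient f y‖ ≤ L * ‖x - y‖) (x y : E) :
    f y ≤ f x + ⟪gradient f x, y - x⟫ + L / 2 * ‖y - x‖ ^ 2 := by
  set v := y - x with hv
  have hgc : Continuous (gradient f) := by
    have : LipschitzWith (Real.toNNReal L) (gradient f) := by
      apply LipschitzWith.of_dist_le_mul
      intro a b
      simpa [dist_eq_norm, Real.coe_toNNReal L hL.le] using hsmooth a b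
    exact this.continuous
  have hcont : Continuous (fun t : ℝ => ⟪gradient f (x + t • v), v⟫) :=
    (hgc.comp (by continuity)).inner continuous_const
  have hftc : f (x + (1:ℝ) • v) - f (x + (0:ℝ) • v)
      = ∫ t in (0:ℝ)..1, ⟪gradient f (x + t • v), v⟫ := by
    refine (intervalIntegral.integral_eq_sub_of_hasDerivAt
      (fun t _ => cg_dir_deriv f hf x v t) ?_).symm
    exact hcont.intervalIntegrable 0 1
  have h0 : x + (0:ℝ) • v = x := by simp
  have h1 : x + (1:ℝ) • v = y := by simp [hv]
  rw [h0, h1] at hftc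
  have hbound : ∫ t in (0:ℝ)..1, ⟪gradient f (x + t • v), v⟫
      ≤ ∫ t in (0:ℝ)..1, (⟪gradient f x, v⟫ + L * t * ‖v‖ ^ 2) := by
    apply intervalIntegral.integral_mono_on (by norm_num)
    · exact hcont.intervalIntegrable 0 1
    · apply Continuous.intervalIntegrable; continuity
    · intro t ht
      have heq : ⟪gradient f (x + t • v), v⟫ - ⟪gradient f x, v⟫
          = ⟪gradient f (x + t • v) - gradient f x, v⟫ := by rw [inner_sub_left]
      have hcs : ⟪gradient f (x + t • v) - gradient f x, v⟫
          ≤ ‖gradient f (x + t • v) - gradient f x‖ * ‖v‖ := real_inner_le_norm _ _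
      have hnorm : ‖gradient f (x + t • v) - gradient f x‖ ≤ L * (t * ‖v‖) := by
        have := hsmooth (x + t • v) x
        simpa [norm_smul, abs_of_nonneg ht.1] using this
      nlinarith [norm_nonneg v, mul_nonneg (mul_nonneg hL.le ht.1) (norm_nonneg v)]
  have hint : ∫ t in (0:ℝ)..1, (⟪gradient f x, v⟫ + L * t * ‖v‖ ^ 2)
      = ⟪gradient f x, v⟫ + L / 2 * ‖v‖ ^ 2 := by
    rw [intervalIntegral.integral_add (by apply Continuous.intervalIntegrable; continuity)
      (by apply Continuous.intervalIntegrable; continuity)]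
    have h2 : ∫ t in (0:ℝ)..1, L * t * ‖v‖ ^ 2 = L / 2 * ‖v‖ ^ 2 := by
      simp_rw [show ∀ t : ℝ, L * t * ‖v‖ ^ 2 = (L * ‖v‖ ^ 2) * t from fun t => by ring]
      rw [intervalIntegral.integral_const_mul, integral_id]
      ring
    rw [h2]
    simp
  linarith [hftc, hbound, hint.le, hint.ge]

private lemma cg_quad (a b c : ℝ) (hb : 0 ≤ b) (hc : 0 ≤ c)
    (h : a ^ 2 ≤ b * a + c ^ 2) : a ≤ b + c := by
  by_contra hco
  push_neg at hco
  nlinarith [mul_nonneg hb hc, sq_nonneg (a - c), sq_nonneg (a - b - c)]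

end Aux

set_option maxHeartbeats 1000000 in
/-- Convergence of Nemirovski's Conjugate Gradient method with a δ₁-inexact gradient
for L-smooth, γ-quasar-convex functions satisfying quadratic growth.
Here `q k` stands for `q_{k-1}` of the method (so `q 0 = 0`). -/
theorem cg_convergence_inexact (n : ℕ) (f : EuclideanSpace ℝ (Fin n) → ℝ)
    (L γ μ δ₁ β : ℝ) (hL : 0 < L) (hγ0 : 0 < γ) (hγ1 : γ ≤ 1) (hμ : 0 < μ)
    (hδ₁ : 0 ≤ δ₁) (hβ0 : 0 < β) (hβ1 : β < 1)
    (hf : Differentiable ℝ f)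
    (hsmooth : ∀ x y, ‖gradient f x - gradient f y‖ ≤ L * ‖x - y‖)
    (xstar : EuclideanSpace ℝ (Fin n)) (hmin : ∀ x, f xstar ≤ f x)
    (hquasar : ∀ x, f x + (1 / γ) * ⟪gradient f x, xstar - x⟫ ≤ f xstar)
    (hgrowth : ∀ x, μ / 2 * ‖x - xstar‖ ^ 2 ≤ f x - f xstar)
    (g : EuclideanSpace ℝ (Fin n) → EuclideanSpace ℝ (Fin n))
    (hg : ∀ x, ‖g x - gradient f x‖ ≤ δ₁)
    (x xhat q : ℕ → EuclideanSpace ℝ (Fin n))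
    (hq0 : q 0 = 0)
    (hqs : ∀ k, q (k + 1) = q k + g (xhat k))
    (hxhat_mem : ∀ k, ∃ a b : ℝ, xhat k = x 0 + a • (x k - x 0) + b • q k)
    (hxhat_min : ∀ k, ∀ a b : ℝ, f (xhat k) ≤ f (x 0 + a • (x k - x 0) + b • q k))
    (hxs : ∀ k, x (k + 1) = xhat k - (1 / (2 * L)) • g (xhat k))
    (hbig : ∀ k, 2 * δ₁ ≤ ‖g (xhat k)‖)
    (T : ℕ) (hT : T = ⌈(2 / (γ * β)) * Real.sqrt (2 * (1 - β) * L / μ)⌉₊) :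
    f (x T) - f xstar
      ≤ β * (f (x 0) - f xstar)
        + (4 / γ) * Real.sqrt (2 * (f (x 0) - f xstar) / μ) * δ₁ := by
  -- orthogonality of the gradient at xhat k to the search plane
  have horthx : ∀ k, ⟪gradient f (xhat k), x k - x 0⟫ = 0 := by
    intro k
    obtain ⟨a, b, hab⟩ := hxhat_mem k
    apply cg_orth_of_min f hf
    intro t
    have hpt : xhat k + t • (x k - x 0) = x 0 + (a + t) • (x k - x 0) + b • q k := by
      rw [hab]; module
    rw [hpt]
    exact hxhat_min k (a + t) b
  have horthq : ∀ k, ⟪gradient f (xhat k), q k⟫ = 0 := by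
    intro k
    obtain ⟨a, b, hab⟩ := hxhat_mem k
    apply cg_orth_of_min f hf
    intro t
    have hpt : xhat k + t • q k = x 0 + a • (x k - x 0) + (b + t) • q k := by
      rw [hab]; module
    rw [hpt]
    exact hxhat_min k a (b + t)
  have horthhat : ∀ k, ⟪gradient f (xhat k), xhat k - x 0⟫ = 0 := by
    intro k
    obtain ⟨a, b, hab⟩ := hxhat_mem k
    have : xhat k - x 0 = a • (x k - x 0) + b • q k := by rw [hab]; module
    rw [this, inner_add_right, real_inner_smul_right, real_inner_smul_right,
      horthx k, horthq k]
    ring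
  -- xhat k improves on x k
  have hhatle : ∀ k, f (xhat k) ≤ f (x k) := by
    intro k
    have := hxhat_min k 1 0
    simpa using this
  -- descent step
  have hdesc : ∀ k, f (x (k + 1))
      ≤ f (xhat k) - (1 / (4 * L) * ‖g (xhat k)‖ ^ 2 - δ₁ / (4 * L) * ‖g (xhat k)‖) := by
    intro k
    have hd := cg_descent f L hL hf hsmooth (xhat k) (x (k + 1))
    have hdiff : x (k + 1) - xhat k = -((1 / (2 * L)) • g (xhat k)) := by
      rw [hxs k]; abel
    rw [hdiff] at hd
    have hinner : ⟪gradient f (xhat k), -((1 / (2 * L)) • g (xhat k))⟫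
        = -(1 / (2 * L)) * ⟪gradient f (xhat k), g (xhat k)⟫ := by
      rw [inner_neg_right, real_inner_smul_right]; ring
    have hnrm : ‖-((1 / (2 * L)) • g (xhat k))‖ ^ 2
        = (1 / (2 * L)) ^ 2 * ‖g (xhat k)‖ ^ 2 := by
      have hns : ‖(1 / (2 * L) : ℝ)‖ = 1 / (2 * L) := Real.norm_of_nonneg (by positivity)
      rw [norm_neg, norm_smul, hns, mul_pow]
    have hip : ‖g (xhat k)‖ ^ 2 - δ₁ * ‖g (xhat k)‖
        ≤ ⟪gradient f (xhat k), g (xhat k)⟫ := by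
      have h1 : ⟪g (xhat k) - gradient f (xhat k), g (xhat k)⟫
          ≤ δ₁ * ‖g (xhat k)‖ := by
        calc ⟪g (xhat k) - gradient f (xhat k), g (xhat k)⟫
            ≤ ‖g (xhat k) - gradient f (xhat k)‖ * ‖g (xhat k)‖ := real_inner_le_norm _ _
          _ ≤ δ₁ * ‖g (xhat k)‖ := by
              apply mul_le_mul_of_nonneg_right (hg _) (norm_nonneg _)
      have h2 : ⟪g (xhat k), g (xhat k)⟫
          = ⟪g (xhat k) - gradient f (xhat k), g (xhat k)⟫
            + ⟪gradient f (xhat k), g (xhat k)⟫ := by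
        rw [← inner_add_left]; congr 1; abel
      have h3 : ⟪g (xhat k), g (xhat k)⟫ = ‖g (xhat k)‖ ^ 2 :=
        real_inner_self_eq_norm_sq _
      linarith
    rw [hinner, hnrm] at hd
    have hb := hbig k
    have hgn : (0:ℝ) ≤ ‖g (xhat k)‖ := norm_nonneg _
    have hL4 : (0:ℝ) < 4 * L := by linarith
    -- f (x (k+1)) ≤ f(xhat k) - (1/(2L)) ip + (L/2)(1/(2L))² ‖g‖²
    have key : -(1 / (2 * L)) * ⟪gradient f (xhat k), g (xhat k)⟫
        + L / 2 * ((1 / (2 * L)) ^ 2 * ‖g (xhat k)‖ ^ 2)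
        ≤ -(1 / (4 * L) * ‖g (xhat k)‖ ^ 2 - δ₁ / (4 * L) * ‖g (xhat k)‖) := by
      have h2L : (0:ℝ) < 2 * L := by linarith
      rw [div_pow, one_pow]
      have expand : L / 2 * (1 / (2 * L) ^ 2 * ‖g (xhat k)‖ ^ 2)
          = 1 / (8 * L) * ‖g (xhat k)‖ ^ 2 := by
        field_simp; ring
      rw [expand]
      have hipge := hip
      have hmono : -(1 / (2 * L)) * ⟪gradient f (xhat k), g (xhat k)⟫
          ≤ -(1 / (2 * L)) * (‖g (xhat k)‖ ^ 2 - δ₁ * ‖g (xhat k)‖) := by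
        have : (0:ℝ) < 1 / (2 * L) := by positivity
        nlinarith
      -- now pure arithmetic using 2δ₁ ≤ ‖g‖
      have harith : -(1 / (2 * L)) * (‖g (xhat k)‖ ^ 2 - δ₁ * ‖g (xhat k)‖)
          + 1 / (8 * L) * ‖g (xhat k)‖ ^ 2
          ≤ -(1 / (4 * L) * ‖g (xhat k)‖ ^ 2 - δ₁ / (4 * L) * ‖g (xhat k)‖) := by
        rw [← sub_nonneg]
        have hkey2 : -(1 / (4 * L) * ‖g (xhat k)‖ ^ 2 - δ₁ / (4 * L) * ‖g (xhat k)‖)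
            - (-(1 / (2 * L)) * (‖g (xhat k)‖ ^ 2 - δ₁ * ‖g (xhat k)‖)
              + 1 / (8 * L) * ‖g (xhat k)‖ ^ 2)
            = (‖g (xhat k)‖ * (‖g (xhat k)‖ - 2 * δ₁)) / (8 * L) := by
          field_simp; ring
        rw [hkey2]
        exact div_nonneg (mul_nonneg hgn (by linarith)) (by linarith)
      linarith
    linarith
  -- notation
  set d := x 0 - xstar with hd_def
  have hdesc' : ∀ k, f (x (k + 1))
      ≤ f (x k) - (1 / (4 * L) * ‖g (xhat k)‖ ^ 2 - δ₁ / (4 * L) * ‖g (xhat k)‖) := by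
    intro k
    have := hdesc k
    linarith [hhatle k]
  have hstep_nonneg : ∀ k, 0 ≤ 1 / (4 * L) * ‖g (xhat k)‖ ^ 2 - δ₁ / (4 * L) * ‖g (xhat k)‖ := by
    intro k
    have hb := hbig k
    have hgn : (0:ℝ) ≤ ‖g (xhat k)‖ := norm_nonneg _
    have heq : 1 / (4 * L) * ‖g (xhat k)‖ ^ 2 - δ₁ / (4 * L) * ‖g (xhat k)‖
        = (‖g (xhat k)‖ * (‖g (xhat k)‖ - δ₁)) / (4 * L) := by
      field_simp
    rw [heq]
    exact div_nonneg (mul_nonneg hgn (by linarith)) (by linarith)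
  have hdec : ∀ k, f (x (k + 1)) ≤ f (x k) := fun k => by
    linarith [hdesc' k, hstep_nonneg k]
  have hxanti : ∀ j m : ℕ, j ≤ m → f (x m) ≤ f (x j) := by
    intro j m hjm
    induction m with
    | zero =>
      have hj0 : j = 0 := Nat.le_zero.mp hjm
      rw [hj0]
    | succ m ih =>
      rcases Nat.lt_or_ge j (m+1) with h | h
      · exact le_trans (hdec m) (ih (Nat.lt_succ_iff.mp h))
      · have : j = m + 1 := le_antisymm hjm h
        rw [this]
  -- telescoping sum
  have htel : ∀ m : ℕ, f (x m) + 1 / (4 * L) * ∑ k ∈ Finset.range m, ‖g (xhat k)‖ ^ 2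
      ≤ f (x 0) + δ₁ / (4 * L) * ∑ k ∈ Finset.range m, ‖g (xhat k)‖ := by
    intro m
    induction m with
    | zero => simp
    | succ m ih =>
      rw [Finset.sum_range_succ, Finset.sum_range_succ]
      have := hdesc' m
      have h2 := hxanti 0 m (Nat.zero_le m)
      nlinarith [hstep_nonneg m]
  -- q as a sum
  have hqsum : ∀ m : ℕ, q m = ∑ k ∈ Finset.range m, g (xhat k) := by
    intro m
    induction m with
    | zero => simpa using hq0
    | succ m ih => rw [Finset.sum_range_succ, hqs m, ih]
  -- recursion for ‖q‖
  have hqrec : ∀ j, ‖q (j+1)‖ ^ 2 ≤ ‖q j‖ ^ 2 + 2 * δ₁ * ‖q j‖ + ‖g (xhat j)‖ ^ 2 := by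
    intro j
    rw [hqs j, norm_add_sq_real]
    have hip : ⟪q j, g (xhat j)⟫ ≤ δ₁ * ‖q j‖ := by
      have hsplit : ⟪q j, g (xhat j)⟫
          = ⟪g (xhat j) - gradient f (xhat j), q j⟫ + ⟪gradient f (xhat j), q j⟫ := by
        rw [real_inner_comm, inner_sub_left]
        ring
      rw [hsplit, horthq j, add_zero]
      calc ⟪g (xhat j) - gradient f (xhat j), q j⟫
          ≤ ‖g (xhat j) - gradient f (xhat j)‖ * ‖q j‖ := real_inner_le_norm _ _
        _ ≤ δ₁ * ‖q j‖ := mul_le_mul_of_nonneg_right (hg _) (norm_nonneg _)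
    linarith
  have hqbound : ∀ j, ‖q j‖ ^ 2 ≤ (∑ k ∈ Finset.range j, ‖g (xhat k)‖ ^ 2)
      + 2 * δ₁ * ∑ k ∈ Finset.range j, ‖q k‖ := by
    intro j
    induction j with
    | zero => simp [hq0]
    | succ j ih =>
      rw [Finset.sum_range_succ, Finset.sum_range_succ]
      have := hqrec j
      linarith
  -- quasar-convexity step
  have hquas : ∀ k, f (xhat k) - f xstar
      ≤ (1 / γ) * (⟪g (xhat k), d⟫ + δ₁ * ‖d‖) := by
    intro k
    have h1 := hquasar (xhat k)
    have hsplit : (xstar - xhat k) = -(xhat k - x 0) + -d := by rw [hd_def]; abel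
    have h2 : ⟪gradient f (xhat k), xstar - xhat k⟫ = -⟪gradient f (xhat k), d⟫ := by
      rw [hsplit, inner_add_right, inner_neg_right, inner_neg_right, horthhat k]
      ring
    rw [h2, mul_neg] at h1
    have h3 : ⟪gradient f (xhat k), d⟫ ≤ ⟪g (xhat k), d⟫ + δ₁ * ‖d‖ := by
      have h4 : ⟪gradient f (xhat k), d⟫ - ⟪g (xhat k), d⟫
          = ⟪gradient f (xhat k) - g (xhat k), d⟫ := (inner_sub_left _ _ _).symm
      have h5 : ⟪gradient f (xhat k) - g (xhat k), d⟫
          ≤ ‖gradient f (xhat k) - g (xhat k)‖ * ‖d‖ := real_inner_le_norm _ _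
      have h6 : ‖gradient f (xhat k) - g (xhat k)‖ ≤ δ₁ := by
        rw [norm_sub_rev]; exact hg _
      nlinarith [norm_nonneg d]
    have hγinv : (0:ℝ) ≤ 1 / γ := by positivity
    have h7 := mul_le_mul_of_nonneg_left h3 hγinv
    linarith
  -- abbreviations for the endgame
  have htelT := htel T
  have hqboundT := hqbound
  set R0 := ‖d‖ with hR0_def
  have hR0nn : (0:ℝ) ≤ R0 := norm_nonneg _
  set S2 := ∑ k ∈ Finset.range T, ‖g (xhat k)‖ ^ 2 with hS2_def
  set S1 := ∑ k ∈ Finset.range T, ‖g (xhat k)‖ with hS1_def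
  have hS2nn : 0 ≤ S2 := Finset.sum_nonneg fun k _ => sq_nonneg _
  have hS1nn : 0 ≤ S1 := Finset.sum_nonneg fun k _ => norm_nonneg _
  set ε0 := f (x 0) - f xstar with hε0_def
  set ε := f (x T) - f xstar with hε_def
  -- summed quasar inequality
  have hsum_quasar : (T:ℝ) * ε ≤ (1/γ) * (‖q T‖ * R0 + (T:ℝ) * (δ₁ * R0)) := by
    have h1 : ∀ k ∈ Finset.range T, ε ≤ f (xhat k) - f xstar := by
      intro k hk
      have hkT : k + 1 ≤ T := Finset.mem_range.mp hk
      have h2 := hxanti (k+1) T hkT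
      have h3 := hdesc k
      have h4 := hstep_nonneg k
      rw [hε_def]
      linarith only [h2, h3, h4]
    have h2 : (T:ℝ) * ε ≤ ∑ k ∈ Finset.range T, (f (xhat k) - f xstar) := by
      have := Finset.card_nsmul_le_sum (Finset.range T)
        (fun k => f (xhat k) - f xstar) ε h1
      simpa [Finset.card_range, nsmul_eq_mul] using this
    have h3 : ∑ k ∈ Finset.range T, (f (xhat k) - f xstar)
        ≤ ∑ k ∈ Finset.range T, (1/γ) * (⟪g (xhat k), d⟫ + δ₁ * R0) :=
      Finset.sum_le_sum fun k _ => hquas k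
    have h4 : ∑ k ∈ Finset.range T, (1/γ) * (⟪g (xhat k), d⟫ + δ₁ * R0)
        = (1/γ) * (⟪q T, d⟫ + (T:ℝ) * (δ₁ * R0)) := by
      rw [← Finset.mul_sum, Finset.sum_add_distrib, Finset.sum_const, Finset.card_range,
        ← sum_inner, ← hqsum T, nsmul_eq_mul]
    have h5 : ⟪q T, d⟫ ≤ ‖q T‖ * R0 := real_inner_le_norm _ _
    have h6 : (1/γ) * (⟪q T, d⟫ + (T:ℝ) * (δ₁ * R0))
        ≤ (1/γ) * (‖q T‖ * R0 + (T:ℝ) * (δ₁ * R0)) := by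
      apply mul_le_mul_of_nonneg_left (by linarith only [h5]) (by positivity)
    calc (T:ℝ) * ε ≤ ∑ k ∈ Finset.range T, (f (xhat k) - f xstar) := h2
      _ ≤ _ := h3
      _ = _ := h4
      _ ≤ _ := h6
  -- the maximum of ‖q j‖ over j ≤ T
  obtain ⟨j0, hj0mem, hj0max⟩ := Finset.exists_max_image (Finset.range (T+1))
    (fun j => ‖q j‖) ⟨0, by simp⟩
  set M := ‖q j0‖ with hM_def
  have hMnn : (0:ℝ) ≤ M := norm_nonneg _
  have hqTM : ‖q T‖ ≤ M := hj0max T (by simp)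
  have hj0T : j0 ≤ T := Nat.lt_succ_iff.mp (Finset.mem_range.mp hj0mem)
  have hMsq : M ^ 2 ≤ 2 * δ₁ * (T:ℝ) * M + S2 := by
    have h1 := hqboundT j0
    rw [← hM_def] at h1
    have h2 : ∑ k ∈ Finset.range j0, ‖g (xhat k)‖ ^ 2 ≤ S2 := by
      rw [hS2_def]
      apply Finset.sum_le_sum_of_subset_of_nonneg (Finset.range_subset_range.mpr hj0T)
      intro k _ _; exact sq_nonneg _
    have h3 : ∑ k ∈ Finset.range j0, ‖q k‖ ≤ (T:ℝ) * M := by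
      calc ∑ k ∈ Finset.range j0, ‖q k‖ ≤ ∑ _k ∈ Finset.range j0, M := by
            apply Finset.sum_le_sum
            intro k hk
            exact hj0max k (Finset.mem_range.mpr
              (lt_of_lt_of_le (Finset.mem_range.mp hk) (le_trans hj0T (Nat.le_succ T))))
        _ = (j0:ℝ) * M := by rw [Finset.sum_const, Finset.card_range, nsmul_eq_mul]
        _ ≤ (T:ℝ) * M := by
            apply mul_le_mul_of_nonneg_right _ hMnn
            exact_mod_cast hj0T
    have h4 := mul_le_mul_of_nonneg_left h3 (show (0:ℝ) ≤ 2 * δ₁ by linarith only [hδ₁])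
    linarith only [h1, h2, h4]
  -- basic positivity facts
  have hεnn : 0 ≤ ε := by rw [hε_def]; linarith only [hmin (x T)]
  have hεε0 : ε ≤ ε0 := by
    rw [hε_def, hε0_def]
    linarith only [hxanti 0 T (Nat.zero_le T)]
  set D := ε0 - ε with hD_def
  have hDnn : 0 ≤ D := by rw [hD_def]; linarith only [hεε0]
  -- telescoping at T
  have hS2le : S2 ≤ 4 * L * D + δ₁ * S1 := by
    have h4L : (0:ℝ) < 4 * L := by linarith
    have h1 : (S2 - δ₁ * S1) / (4 * L) ≤ D := by
      have heq : (S2 - δ₁ * S1) / (4 * L) = 1 / (4 * L) * S2 - δ₁ / (4 * L) * S1 := by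
        field_simp
      rw [heq, hD_def, hε0_def, hε_def]
      linarith only [htelT]
    rw [div_le_iff₀ h4L] at h1
    linarith only [h1]
  -- square roots
  set R := Real.sqrt (2 * ε0 / μ) with hR_def
  have hRnn : 0 ≤ R := Real.sqrt_nonneg _
  set s := Real.sqrt S2 with hs_def
  have hsnn : 0 ≤ s := Real.sqrt_nonneg _
  have hs2 : s ^ 2 = S2 := Real.sq_sqrt hS2nn
  set w := Real.sqrt (L * D) with hw_def
  have hwnn : 0 ≤ w := Real.sqrt_nonneg _
  have hw2 : w ^ 2 = L * D := Real.sq_sqrt (mul_nonneg hL.le hDnn)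
  set sT := Real.sqrt (T:ℝ) with hsT_def
  have hsTnn : 0 ≤ sT := Real.sqrt_nonneg _
  have hsT2 : sT ^ 2 = (T:ℝ) := Real.sq_sqrt (Nat.cast_nonneg T)
  -- T is at least its real lower bound and positive
  have hWarg : (0:ℝ) < 2 * (1 - β) * L / μ :=
    div_pos (mul_pos (mul_pos two_pos (by linarith)) hL) hμ
  have hWpos : 0 < Real.sqrt (2 * (1 - β) * L / μ) := Real.sqrt_pos.mpr hWarg
  have hTpos : 0 < T := by
    rw [hT]
    exact Nat.ceil_pos.mpr (mul_pos (by positivity) hWpos)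
  have hT1 : (1:ℝ) ≤ (T:ℝ) := by exact_mod_cast hTpos
  have hTW : 2 / (γ * β) * Real.sqrt (2 * (1 - β) * L / μ) ≤ (T:ℝ) := by
    rw [hT]
    exact Nat.le_ceil _
  have hsTleT : sT ≤ (T:ℝ) := by
    rw [hsT_def]
    calc Real.sqrt (T:ℝ) ≤ Real.sqrt ((T:ℝ) ^ 2) := by
          apply Real.sqrt_le_sqrt
          rw [pow_two]
          exact le_mul_of_one_le_left (Nat.cast_nonneg T) hT1
      _ = (T:ℝ) := Real.sqrt_sq (Nat.cast_nonneg T)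
  -- Cauchy–Schwarz on the sums
  have hS1le : S1 ≤ sT * s := by
    have h1 : S1 ^ 2 ≤ (T:ℝ) * S2 := by
      have h := sq_sum_le_card_mul_sum_sq
        (s := Finset.range T) (f := fun k => ‖g (xhat k)‖)
      simpa [Finset.card_range, hS1_def, hS2_def] using h
    have h2 : S1 ^ 2 ≤ 0 * S1 + (sT * s) ^ 2 := by
      have h3 : (sT * s) ^ 2 = (T:ℝ) * S2 := by
        rw [mul_pow, hsT2, hs2]
      linarith only [h1, h3]
    have h4 := cg_quad S1 0 (sT * s) le_rfl (mul_nonneg hsTnn hsnn) h2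
    linarith only [h4]
  -- bound s
  have hsle : s ≤ δ₁ * sT + 2 * w := by
    have h1 : s ^ 2 ≤ (δ₁ * sT) * s + (2 * w) ^ 2 := by
      have h2 := mul_le_mul_of_nonneg_left hS1le hδ₁
      have h3 : (2 * w) ^ 2 = 4 * (L * D) := by rw [mul_pow, hw2]; ring
      ring_nf
      ring_nf at h2 h3 hS2le hs2
      linarith only [h2, h3, hS2le, hs2]
    have := cg_quad s (δ₁ * sT) (2 * w) (mul_nonneg hδ₁ hsTnn) (by linarith only [hwnn]) h1
    linarith only [this]
  -- bound M
  have hMle : M ≤ 2 * δ₁ * (T:ℝ) + s := by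
    have h1 : M ^ 2 ≤ (2 * δ₁ * (T:ℝ)) * M + s ^ 2 := by
      ring_nf
      ring_nf at hMsq hs2
      linarith only [hMsq, hs2]
    exact cg_quad M (2 * δ₁ * (T:ℝ)) s
      (by positivity) hsnn h1
  -- growth: R0 ≤ R
  have hR0le : R0 ≤ R := by
    have h1 := hgrowth (x 0)
    rw [hR_def]
    apply Real.le_sqrt_of_sq_le
    have hnorm : ‖x 0 - xstar‖ = R0 := by rw [hR0_def, hd_def]
    rw [hnorm] at h1
    rw [le_div_iff₀ hμ, hε0_def]
    linarith only [h1]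
  clear_value d R0 S2 S1 ε0 ε M D R s w sT
  -- main chain
  by_contra hcon
  push_neg at hcon
  have hγRδnn : (0:ℝ) ≤ 4 / γ * R * δ₁ :=
    mul_nonneg (mul_nonneg (by positivity) hRnn) hδ₁
  have hε0pos : 0 < ε0 := by
    by_contra hb
    push_neg at hb
    have h1 : 0 ≤ (1 - β) * (-ε0) := mul_nonneg (by linarith only [hβ1]) (by linarith only [hb])
    ring_nf at h1
    linarith only [h1, hb, hcon, hεε0, hγRδnn]
  have hDlt : D < (1 - β) * ε0 := by
    rw [hD_def]
    have : (1 - β) * ε0 = ε0 - β * ε0 := by ring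
    rw [this]
    linarith only [hcon, hγRδnn]
  have hchain : γ * (T:ℝ) * ε ≤ (4 * δ₁ * (T:ℝ) + 2 * w) * R := by
    have h1 := mul_le_mul_of_nonneg_left hsum_quasar hγ0.le
    have h2 : γ * ((1/γ) * (‖q T‖ * R0 + (T:ℝ) * (δ₁ * R0)))
        = ‖q T‖ * R0 + (T:ℝ) * (δ₁ * R0) := by
      field_simp
    rw [h2] at h1
    have h3 : ‖q T‖ * R0 + (T:ℝ) * (δ₁ * R0) ≤ (M + (T:ℝ) * δ₁) * R0 := by
      have h7 := mul_le_mul_of_nonneg_right hqTM hR0nn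
      ring_nf
      ring_nf at h7
      linarith only [h7]
    have h4 : M + (T:ℝ) * δ₁ ≤ 4 * δ₁ * (T:ℝ) + 2 * w := by
      have h5 : δ₁ * sT ≤ δ₁ * (T:ℝ) := mul_le_mul_of_nonneg_left hsTleT hδ₁
      linarith only [h5, hMle, hsle]
    have h6 : (M + (T:ℝ) * δ₁) * R0 ≤ (4 * δ₁ * (T:ℝ) + 2 * w) * R :=
      mul_le_mul h4 hR0le hR0nn
        (add_nonneg (by positivity) (by linarith only [hwnn]))
    calc γ * (T:ℝ) * ε = γ * ((T:ℝ) * ε) := by ring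
      _ ≤ _ := h1
      _ ≤ _ := h3
      _ ≤ _ := h6
  have hwR : w * R < ε0 * Real.sqrt (2 * (1 - β) * L / μ) := by
    have h1 : w * R = Real.sqrt (L * D * (2 * ε0 / μ)) := by
      rw [hw_def, hR_def, ← Real.sqrt_mul (mul_nonneg hL.le hDnn)]
    have h2 : ε0 * Real.sqrt (2 * (1 - β) * L / μ)
        = Real.sqrt ((2 * (1 - β) * L / μ) * ε0 ^ 2) := by
      rw [Real.sqrt_mul hWarg.le, Real.sqrt_sq hε0pos.le]
      ring
    rw [h1, h2]
    apply Real.sqrt_lt_sqrt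
      (mul_nonneg (mul_nonneg hL.le hDnn) (div_nonneg (by linarith only [hε0pos]) hμ.le))
    have hc : (0:ℝ) < 2 * L * ε0 / μ :=
      div_pos (mul_pos (mul_pos two_pos hL) hε0pos) hμ
    have h3 := mul_lt_mul_of_pos_left hDlt hc
    have h4 : L * D * (2 * ε0 / μ) = 2 * L * ε0 / μ * D := by ring
    have h5 : 2 * (1 - β) * L / μ * ε0 ^ 2 = 2 * L * ε0 / μ * ((1 - β) * ε0) := by ring
    rw [h4, h5]
    exact h3
  have h2ε0W : 2 * ε0 * Real.sqrt (2 * (1 - β) * L / μ) ≤ γ * β * ε0 * (T:ℝ) := by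
    have hmul := mul_le_mul_of_nonneg_left hTW
      (le_of_lt (mul_pos (mul_pos hγ0 hβ0) hε0pos))
    have heq : γ * β * ε0 * (2 / (γ * β) * Real.sqrt (2 * (1 - β) * L / μ))
        = 2 * ε0 * Real.sqrt (2 * (1 - β) * L / μ) := by
      field_simp
    rw [heq] at hmul
    linarith only [hmul]
  have hcon2 : γ * (T:ℝ) * (β * ε0 + 4 / γ * R * δ₁) < γ * (T:ℝ) * ε :=
    mul_lt_mul_of_pos_left hcon
      (mul_pos hγ0 (by exact_mod_cast hTpos))
  have hexp : γ * (T:ℝ) * (β * ε0 + 4 / γ * R * δ₁)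
      = γ * β * ε0 * (T:ℝ) + 4 * δ₁ * (T:ℝ) * R := by
    field_simp
  rw [hexp] at hcon2
  have hexp2 : (4 * δ₁ * (T:ℝ) + 2 * w) * R = 4 * δ₁ * (T:ℝ) * R + 2 * (w * R) := by ring
  rw [hexp2] at hchain
  linarith only [hchain, hwR, h2ε0W, hcon2]
end

section
/- Let f : ℝⁿ → ℝ be differentiable, L-smooth and γ-quasar-convex with respect to a minimizer x* (γ ∈ (0,1]), satisfying the quadratic growth condition f(x) − f* ≥ (μ/2)‖x − x*‖² with μ > 0, and f(x₀) − f* ≤ 1. Let g : ℝⁿ → ℝⁿ satisfy ‖g(x) − ∇f(x)‖ ≤ δ₁ for all x, where δ₁² ≤ γ²α²με/32 for some α ∈ (0,1) and some 0 < ε ≤ f(x₀) − f*. Suppose the Nemirovski Conjugate Gradient method is restarted: each restart runs T = ⌈(8/γ)·√(L/μ)·√(1+α)/(1−α)⌉ iterations starting from the output of the previous restart, with ‖g(x̂_k)‖ ≥ 2δ₁ at every iteration of every restart. Then after K = ⌈(2/(1−α))·log(1/ε)⌉ restarts the output point x̂ satisfies f(x̂) − f* ≤ ε. -/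
open scoped RealInnerProductSpace

variable {n : ℕ}

local notation "E" => EuclideanSpace ℝ (Fin n)

lemma line_hasDerivAt (f : E → ℝ) (hf : Differentiable ℝ f) (p v : E) (t : ℝ) :
    HasDerivAt (fun s : ℝ => f (p + s • v)) ⟪gradient f (p + t • v), v⟫ t := by
  have h1 : HasDerivAt (fun s : ℝ => p + s • v) v t := by
    simpa using ((hasDerivAt_id t).smul_const v).const_add p
  have h2 := ((hf (p + t • v)).hasGradientAt.hasFDerivAt).comp_hasDerivAt t h1
  simpa [InnerProductSpace.toDual_apply_apply, Function.comp_def] using h2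

lemma descent_lemma (f : E → ℝ) (L : ℝ) (hL : 0 < L) (hf : Differentiable ℝ f)
    (hsmooth : ∀ x y, ‖gradient f x - gradient f y‖ ≤ L * ‖x - y‖) (u v : E) :
    f (u + v) ≤ f u + ⟪gradient f u, v⟫ + L / 2 * ‖v‖ ^ 2 := by
  have hcontg : Continuous (gradient f) := by
    have : LipschitzWith L.toNNReal (gradient f) := by
      apply LipschitzWith.of_dist_le_mul
      intro a b
      rw [dist_eq_norm, dist_eq_norm]
      simpa [Real.coe_toNNReal _ hL.le] using hsmooth a b
    exact this.continuous
  set φ' : ℝ → ℝ := fun s => ⟪gradient f (u + s • v), v⟫ with hφ'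
  have hcont : Continuous φ' := by
    exact (Continuous.inner (hcontg.comp (by continuity)) continuous_const)
  have hftc : ∫ s in (0:ℝ)..1, φ' s = f (u + v) - f u := by
    have := intervalIntegral.integral_eq_sub_of_hasDerivAt
      (f := fun s : ℝ => f (u + s • v)) (f' := φ')
      (fun t _ => line_hasDerivAt f hf u v t) (hcont.intervalIntegrable 0 1)
    simpa using this
  have hbound : ∀ s ∈ Set.Icc (0:ℝ) 1, φ' s ≤ ⟪gradient f u, v⟫ + s * (L * ‖v‖ ^ 2) := by
    intro s hs
    have : φ' s - ⟪gradient f u, v⟫ = ⟪gradient f (u + s • v) - gradient f u, v⟫ := by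
      rw [inner_sub_left]
    have h2 : ⟪gradient f (u + s • v) - gradient f u, v⟫ ≤ s * (L * ‖v‖ ^ 2) := by
      calc ⟪gradient f (u + s • v) - gradient f u, v⟫
          ≤ ‖gradient f (u + s • v) - gradient f u‖ * ‖v‖ := real_inner_le_norm _ _
        _ ≤ (L * ‖u + s • v - u‖) * ‖v‖ := by
            apply mul_le_mul_of_nonneg_right (hsmooth _ _) (norm_nonneg _)
        _ = s * (L * ‖v‖ ^ 2) := by
            rw [add_sub_cancel_left, norm_smul, Real.norm_eq_abs, abs_of_nonneg hs.1]
            ring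
    linarith [this]
  have hint : ∫ s in (0:ℝ)..1, φ' s ≤ ∫ s in (0:ℝ)..1, (⟪gradient f u, v⟫ + s * (L * ‖v‖ ^ 2)) := by
    apply intervalIntegral.integral_mono_on (by norm_num) (hcont.intervalIntegrable 0 1)
    · exact ((continuous_const.add (continuous_id'.mul continuous_const)).intervalIntegrable 0 1)
    · intro s hs; exact hbound s hs
  have hrhs : ∫ s in (0:ℝ)..1, (⟪gradient f u, v⟫ + s * (L * ‖v‖ ^ 2))
      = ⟪gradient f u, v⟫ + L / 2 * ‖v‖ ^ 2 := by
    rw [intervalIntegral.integral_add (f := fun _ => ⟪gradient f u, v⟫) (g := fun s => s * (L * ‖v‖ ^ 2)) (intervalIntegrable_const)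
      ((continuous_id'.mul continuous_const).intervalIntegrable 0 1),
      intervalIntegral.integral_const]
    have h2 : (∫ s in (0:ℝ)..1, s * (L * ‖v‖ ^ 2)) = (L * ‖v‖ ^ 2) / 2 := by
      rw [intervalIntegral.integral_mul_const, integral_id]; ring
    rw [h2]; norm_num; ring
  linarith [hftc ▸ hint, hrhs ▸ hint]

lemma subspace_orth (f : E → ℝ) (hf : Differentiable ℝ f) (p u w xh : E) (a b : ℝ)
    (hx : xh = p + a • u + b • w)
    (hm : ∀ a' b' : ℝ, f xh ≤ f (p + a' • u + b' • w)) :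
    ⟪gradient f xh, u⟫ = 0 ∧ ⟪gradient f xh, w⟫ = 0 := by
  have key : ∀ d : E, (∀ t : ℝ, f xh ≤ f (xh + t • d)) → ⟪gradient f xh, d⟫ = 0 := by
    intro d hd
    have hmin : IsLocalMin (fun t : ℝ => f (xh + t • d)) 0 := by
      apply Filter.Eventually.of_forall
      intro t
      simpa using hd t
    have hder := line_hasDerivAt f hf xh d 0
    have := hmin.hasDerivAt_eq_zero (by simpa using hder)
    simpa using this
  constructor
  · apply key
    intro t
    have := hm (a + t) b
    calc f xh ≤ f (p + (a + t) • u + b • w) := hm (a + t) b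
      _ = f (xh + t • u) := by rw [hx]; congr 1; rw [add_smul]; abel
  · apply key
    intro t
    calc f xh ≤ f (p + a • u + (b + t) • w) := hm a (b + t)
      _ = f (xh + t • w) := by rw [hx]; congr 1; rw [add_smul]; abel

set_option maxHeartbeats 1000000 in
lemma run_lemma (f : E → ℝ) (L γ μ δ₁ α ε : ℝ) (hL : 0 < L) (hγ0 : 0 < γ)
    (hμ : 0 < μ) (hδ₁ : 0 ≤ δ₁) (hα0 : 0 < α) (hα1 : α < 1)
    (hf : Differentiable ℝ f)
    (hsmooth : ∀ x y, ‖gradient f x - gradient f y‖ ≤ L * ‖x - y‖)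
    (xstar : E) (hmin : ∀ x, f xstar ≤ f x)
    (hquasar : ∀ x, f x + (1 / γ) * ⟪gradient f x, xstar - x⟫ ≤ f xstar)
    (hgrowth : ∀ x, μ / 2 * ‖x - xstar‖ ^ 2 ≤ f x - f xstar)
    (g : E → E) (hg : ∀ x, ‖g x - gradient f x‖ ≤ δ₁)
    (hε0 : 0 < ε)
    (hδε : δ₁ ^ 2 ≤ γ ^ 2 * α ^ 2 * μ * ε / 32)
    (T : ℕ) (hT : T = ⌈(8 / γ) * Real.sqrt (L / μ) * Real.sqrt (1 + α) / (1 - α)⌉₊)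
    (X Xh Q : ℕ → E)
    (hq0 : Q 0 = 0) (hqs : ∀ k, Q (k + 1) = Q k + g (Xh k))
    (hmem : ∀ k, ∃ a b : ℝ, Xh k = X 0 + a • (X k - X 0) + b • Q k)
    (hminXh : ∀ k, ∀ a b : ℝ, f (Xh k) ≤ f (X 0 + a • (X k - X 0) + b • Q k))
    (hxs : ∀ k, X (k + 1) = Xh k - (1 / (2 * L)) • g (Xh k))
    (hbig : ∀ k, 2 * δ₁ ≤ ‖g (Xh k)‖) :
    f (X T) - f xstar ≤ (1 - α) / 2 * (f (X 0) - f xstar)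
      + α / 2 * Real.sqrt (ε * (f (X 0) - f xstar)) := by
  set Δ₀ : ℝ := f (X 0) - f xstar with hΔ₀def
  set ΔT : ℝ := f (X T) - f xstar with hΔTdef
  have hΔ₀ : 0 ≤ Δ₀ := sub_nonneg.2 (hmin _)
  have hΔT : 0 ≤ ΔT := sub_nonneg.2 (hmin _)
  -- orthogonality
  have horth : ∀ k, ⟪gradient f (Xh k), X k - X 0⟫ = 0 ∧ ⟪gradient f (Xh k), Q k⟫ = 0 := by
    intro k
    obtain ⟨a, b, hab⟩ := hmem k
    exact subspace_orth f hf (X 0) (X k - X 0) (Q k) (Xh k) a b hab (hminXh k)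
  have horth3 : ∀ k, ⟪gradient f (Xh k), Xh k - X 0⟫ = 0 := by
    intro k
    obtain ⟨a, b, hab⟩ := hmem k
    have h1 := (horth k).1
    have h2 := (horth k).2
    have : Xh k - X 0 = a • (X k - X 0) + b • Q k := by rw [hab]; abel
    rw [this, inner_add_right, inner_smul_right, inner_smul_right, h1, h2]
    ring
  -- descent
  have hdescent : ∀ k, f (X (k + 1)) ≤ f (Xh k) - ‖g (Xh k)‖ ^ 2 / (8 * L) := by
    intro k
    set G := g (Xh k) with hG
    have hd := descent_lemma f L hL hf hsmooth (Xh k) (-((1 / (2 * L)) • G))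
    have hx1 : X (k + 1) = Xh k + -((1 / (2 * L)) • G) := by rw [hxs k]; abel
    rw [← hx1] at hd
    have hinner : ⟪gradient f (Xh k), -((1 / (2 * L)) • G)⟫
        = -(1 / (2 * L)) * ⟪gradient f (Xh k), G⟫ := by
      rw [inner_neg_right, inner_smul_right]; ring
    have hip : ‖G‖ ^ 2 / 2 ≤ ⟪gradient f (Xh k), G⟫ := by
      have h1 : ⟪gradient f (Xh k), G⟫ = ‖G‖ ^ 2 - ⟪G - gradient f (Xh k), G⟫ := by
        rw [inner_sub_left, real_inner_self_eq_norm_sq]; ring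
      have h2 : ⟪G - gradient f (Xh k), G⟫ ≤ δ₁ * ‖G‖ := by
        calc ⟪G - gradient f (Xh k), G⟫ ≤ ‖G - gradient f (Xh k)‖ * ‖G‖ := real_inner_le_norm _ _
          _ ≤ δ₁ * ‖G‖ := mul_le_mul_of_nonneg_right (hg _) (norm_nonneg _)
      have h3 : δ₁ * ‖G‖ ≤ ‖G‖ ^ 2 / 2 := by
        have := hbig k
        nlinarith [norm_nonneg G]
      linarith
    have hnrm : ‖-((1 / (2 * L)) • G)‖ ^ 2 = (1 / (2 * L)) ^ 2 * ‖G‖ ^ 2 := by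
      rw [norm_neg, norm_smul, mul_pow, Real.norm_eq_abs, sq_abs]
    rw [hinner, hnrm] at hd
    have hLpos : (0:ℝ) < 8 * L := by linarith
    have : -(1 / (2 * L)) * ⟪gradient f (Xh k), G⟫ ≤ -(1 / (2 * L)) * (‖G‖ ^ 2 / 2) := by
      apply mul_le_mul_of_nonpos_left hip
      have : (0:ℝ) < 1 / (2 * L) := by positivity
      linarith
    have hfin : f (Xh k) + -(1 / (2 * L)) * (‖G‖ ^ 2 / 2) + L / 2 * ((1 / (2 * L)) ^ 2 * ‖G‖ ^ 2)
        = f (Xh k) - ‖G‖ ^ 2 / (8 * L) := by field_simp; ring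
    linarith
  have hXhle : ∀ k, f (Xh k) ≤ f (X k) := by
    intro k
    have := hminXh k 1 0
    simpa using this
  have hdec : ∀ k, f (X (k + 1)) ≤ f (X k) := by
    intro k
    have h1 := hdescent k
    have h2 := hXhle k
    have h3 : 0 ≤ ‖g (Xh k)‖ ^ 2 / (8 * L) := by positivity
    linarith
  have hanti : ∀ m k, k ≤ m → f (X m) ≤ f (X k) := by
    intro m
    induction m with
    | zero => intro k hk; rw [Nat.le_zero.mp hk]
    | succ m ih =>
      intro k hk
      rcases Nat.eq_or_lt_of_le hk with h | h
      · rw [h]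
      · exact le_trans (hdec m) (ih k (Nat.lt_succ_iff.mp h))
  -- sum of squares bound
  have hsumsq : ∀ m, ∑ i ∈ Finset.range m, ‖g (Xh i)‖ ^ 2 ≤ 8 * L * (f (X 0) - f (X m)) := by
    intro m
    have h1 : ∀ i, ‖g (Xh i)‖ ^ 2 ≤ 8 * L * (f (X i) - f (X (i + 1))) := by
      intro i
      have := hdescent i
      have h2 := hXhle i
      have hLpos : (0:ℝ) < 8 * L := by linarith
      have h3 : ‖g (Xh i)‖ ^ 2 / (8 * L) ≤ f (X i) - f (X (i + 1)) := by linarith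
      rw [div_le_iff₀ hLpos] at h3
      linarith
    calc ∑ i ∈ Finset.range m, ‖g (Xh i)‖ ^ 2
        ≤ ∑ i ∈ Finset.range m, 8 * L * (f (X i) - f (X (i + 1))) :=
          Finset.sum_le_sum fun i _ => h1 i
      _ = 8 * L * ∑ i ∈ Finset.range m, (f (X i) - f (X (i + 1))) := by
          rw [Finset.mul_sum]
      _ = 8 * L * (f (X 0) - f (X m)) := by
          rw [Finset.sum_range_sub' (fun i => f (X i)) m]
  -- Q m = partial sums
  have hQsum : ∀ m, Q m = ∑ i ∈ Finset.range m, g (Xh i) := by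
    intro m
    induction m with
    | zero => simpa using hq0
    | succ m ih => rw [hqs m, ih, Finset.sum_range_succ]
  -- Q norm bound
  have hQbound : ∀ m, ‖Q m‖ ≤
      Real.sqrt (∑ i ∈ Finset.range m, ‖g (Xh i)‖ ^ 2) + m * δ₁ := by
    intro m
    induction m with
    | zero => simp [hq0]
    | succ m ih =>
      set S : ℝ := ∑ i ∈ Finset.range m, ‖g (Xh i)‖ ^ 2 with hS
      have hSnn : 0 ≤ S := Finset.sum_nonneg fun i _ => sq_nonneg _
      set b : ℝ := ‖g (Xh m)‖ with hb
      have hbnn : 0 ≤ b := norm_nonneg _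
      have hSucc : ∑ i ∈ Finset.range (m + 1), ‖g (Xh i)‖ ^ 2 = S + b ^ 2 := by
        rw [Finset.sum_range_succ]
      have hiq : ⟪Q m, g (Xh m)⟫ ≤ δ₁ * ‖Q m‖ := by
        have h0 : ⟪Q m, gradient f (Xh m)⟫ = 0 := by
          rw [real_inner_comm]; exact (horth m).2
        have : ⟪Q m, g (Xh m)⟫ = ⟪Q m, g (Xh m) - gradient f (Xh m)⟫ := by
          rw [inner_sub_right, h0]; ring
        rw [this]
        calc ⟪Q m, g (Xh m) - gradient f (Xh m)⟫
            ≤ ‖Q m‖ * ‖g (Xh m) - gradient f (Xh m)‖ := real_inner_le_norm _ _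
          _ ≤ ‖Q m‖ * δ₁ := mul_le_mul_of_nonneg_left (hg _) (norm_nonneg _)
          _ = δ₁ * ‖Q m‖ := mul_comm _ _
      have hsq : ‖Q (m + 1)‖ ^ 2 ≤ (‖Q m‖ + δ₁) ^ 2 + b ^ 2 := by
        rw [hqs m]
        rw [norm_add_sq_real]
        nlinarith [hiq, hδ₁, norm_nonneg (Q m)]
      have h1 : ‖Q m‖ + δ₁ ≤ Real.sqrt S + ((m:ℝ) + 1) * δ₁ := by
        have h1' := ih
        have : ((m:ℝ) + 1) * δ₁ = (m:ℝ) * δ₁ + δ₁ := by ring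
        linarith
      have h2 : (0:ℝ) ≤ ‖Q m‖ + δ₁ := add_nonneg (norm_nonneg _) hδ₁
      have hstep2 : (‖Q m‖ + δ₁) ^ 2 + b ^ 2 ≤ (Real.sqrt S + ((m:ℝ) + 1) * δ₁) ^ 2 + b ^ 2 := by
        have := pow_le_pow_left₀ h2 h1 2
        linarith
      have hkey : (Real.sqrt S + ((m:ℝ) + 1) * δ₁) ^ 2 + b ^ 2
          ≤ (Real.sqrt (S + b ^ 2) + ((m:ℝ) + 1) * δ₁) ^ 2 := by
        have hs1 : Real.sqrt S ^ 2 = S := Real.sq_sqrt hSnn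
        have hs2 : Real.sqrt (S + b ^ 2) ^ 2 = S + b ^ 2 := Real.sq_sqrt (add_nonneg hSnn (sq_nonneg b))
        have hs3 : Real.sqrt S ≤ Real.sqrt (S + b ^ 2) := Real.sqrt_le_sqrt (le_add_of_nonneg_right (sq_nonneg b))
        have hc : (0:ℝ) ≤ ((m:ℝ) + 1) * δ₁ := mul_nonneg (by positivity) hδ₁
        nlinarith [Real.sqrt_nonneg S, Real.sqrt_nonneg (S + b ^ 2)]
      have hfinal : ‖Q (m + 1)‖ ^ 2 ≤ (Real.sqrt (S + b ^ 2) + ((m:ℝ) + 1) * δ₁) ^ 2 := by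
        linarith
      have hrhsnn : (0:ℝ) ≤ Real.sqrt (S + b ^ 2) + ((m:ℝ) + 1) * δ₁ := add_nonneg (Real.sqrt_nonneg _) (mul_nonneg (by positivity) hδ₁)
      rw [hSucc]
      push_cast
      exact (pow_le_pow_iff_left₀ (norm_nonneg _) hrhsnn (by norm_num)).mp hfinal
  -- quasar-convexity pointwise bound
  set R : ℝ := ‖X 0 - xstar‖ with hRdef
  have hquasark : ∀ k, γ * (f (Xh k) - f xstar) ≤ ⟪g (Xh k), X 0 - xstar⟫ + δ₁ * R := by
    intro k
    have hq := hquasar (Xh k)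
    have h2 : ⟪gradient f (Xh k), xstar - Xh k⟫ = -⟪gradient f (Xh k), Xh k - xstar⟫ := by
      rw [← inner_neg_right]; congr 1; abel
    rw [h2] at hq
    have h3 : f (Xh k) - f xstar ≤ (1 / γ) * ⟪gradient f (Xh k), Xh k - xstar⟫ := by linarith
    have h1 : γ * (f (Xh k) - f xstar) ≤ ⟪gradient f (Xh k), Xh k - xstar⟫ := by
      calc γ * (f (Xh k) - f xstar) ≤ γ * ((1 / γ) * ⟪gradient f (Xh k), Xh k - xstar⟫) :=
            mul_le_mul_of_nonneg_left h3 hγ0.le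
        _ = ⟪gradient f (Xh k), Xh k - xstar⟫ := by field_simp
    have h4 : ⟪gradient f (Xh k), Xh k - xstar⟫ = ⟪gradient f (Xh k), X 0 - xstar⟫ := by
      have he : Xh k - xstar = (Xh k - X 0) + (X 0 - xstar) := by abel
      rw [he, inner_add_right, horth3 k, zero_add]
    have h6 : ⟪gradient f (Xh k) - g (Xh k), X 0 - xstar⟫ ≤ δ₁ * R := by
      calc ⟪gradient f (Xh k) - g (Xh k), X 0 - xstar⟫
          ≤ ‖gradient f (Xh k) - g (Xh k)‖ * R := real_inner_le_norm _ _
        _ ≤ δ₁ * R := mul_le_mul_of_nonneg_right (by rw [norm_sub_rev]; exact hg _) (norm_nonneg _)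
    have h7 : ⟪gradient f (Xh k), X 0 - xstar⟫
        = ⟪g (Xh k), X 0 - xstar⟫ + ⟪gradient f (Xh k) - g (Xh k), X 0 - xstar⟫ := by
      rw [inner_sub_left]; ring
    rw [h4, h7] at h1
    linarith
  -- summed bound
  have hsum : γ * ((T:ℝ) * ΔT) ≤ ‖Q T‖ * R + (T:ℝ) * (δ₁ * R) := by
    have h1 : ∀ k ∈ Finset.range T, γ * ΔT ≤ ⟪g (Xh k), X 0 - xstar⟫ + δ₁ * R := by
      intro k hk
      have hkT : k + 1 ≤ T := Finset.mem_range.mp hk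
      have hm1 : f (X T) ≤ f (X (k + 1)) := hanti T (k + 1) hkT
      have hm2 : f (X (k + 1)) ≤ f (Xh k) := by
        have := hdescent k
        have hnn : (0:ℝ) ≤ ‖g (Xh k)‖ ^ 2 / (8 * L) := by positivity
        linarith
      have h3 : γ * ΔT ≤ γ * (f (Xh k) - f xstar) :=
        mul_le_mul_of_nonneg_left (by rw [hΔTdef]; linarith) hγ0.le
      exact h3.trans (hquasark k)
    have h2 := Finset.sum_le_sum h1
    rw [Finset.sum_const, Finset.card_range, nsmul_eq_mul] at h2
    have h3 : ∑ k ∈ Finset.range T, (⟪g (Xh k), X 0 - xstar⟫ + δ₁ * R)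
        = ⟪Q T, X 0 - xstar⟫ + (T:ℝ) * (δ₁ * R) := by
      rw [Finset.sum_add_distrib, Finset.sum_const, Finset.card_range, nsmul_eq_mul, hQsum T,
        sum_inner]
    rw [h3] at h2
    have h4 : ⟪Q T, X 0 - xstar⟫ ≤ ‖Q T‖ * R := real_inner_le_norm _ _
    calc γ * ((T:ℝ) * ΔT) = (T:ℝ) * (γ * ΔT) := by ring
      _ ≤ ⟪Q T, X 0 - xstar⟫ + (T:ℝ) * (δ₁ * R) := h2
      _ ≤ ‖Q T‖ * R + (T:ℝ) * (δ₁ * R) := by linarith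
  -- distance bound
  have hR : R ≤ Real.sqrt (2 * Δ₀ / μ) := by
    have h1 := hgrowth (X 0)
    have h2 : R ^ 2 ≤ 2 * Δ₀ / μ := by
      rw [le_div_iff₀ hμ]; nlinarith
    calc R = Real.sqrt (R ^ 2) := (Real.sqrt_sq (norm_nonneg _)).symm
      _ ≤ _ := Real.sqrt_le_sqrt h2
  have hRnn : (0:ℝ) ≤ R := norm_nonneg _
  -- Q T bound
  have hQT : ‖Q T‖ ≤ Real.sqrt (8 * L * Δ₀) + (T:ℝ) * δ₁ := by
    have h1 := hQbound T
    have h2 : (∑ i ∈ Finset.range T, ‖g (Xh i)‖ ^ 2) ≤ 8 * L * Δ₀ := by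
      have h3 := hsumsq T
      have h4 := hmin (X T)
      nlinarith
    have h5 := Real.sqrt_le_sqrt h2
    linarith
  -- sqrt products
  have hsqrtprod : Real.sqrt (8 * L * Δ₀) * Real.sqrt (2 * Δ₀ / μ) = 4 * Δ₀ * Real.sqrt (L / μ) := by
    rw [← Real.sqrt_mul (by positivity)]
    have he : 8 * L * Δ₀ * (2 * Δ₀ / μ) = (4 * Δ₀) ^ 2 * (L / μ) := by field_simp; ring
    rw [he, Real.sqrt_mul (sq_nonneg _), Real.sqrt_sq (by positivity)]
  have hδprod : δ₁ * Real.sqrt (2 * Δ₀ / μ) ≤ γ * α / 4 * Real.sqrt (ε * Δ₀) := by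
    have h1 : δ₁ ≤ Real.sqrt (γ ^ 2 * α ^ 2 * μ * ε / 32) := by
      rw [show δ₁ = Real.sqrt (δ₁ ^ 2) from (Real.sqrt_sq hδ₁).symm]
      exact Real.sqrt_le_sqrt hδε
    calc δ₁ * Real.sqrt (2 * Δ₀ / μ)
        ≤ Real.sqrt (γ ^ 2 * α ^ 2 * μ * ε / 32) * Real.sqrt (2 * Δ₀ / μ) :=
          mul_le_mul_of_nonneg_right h1 (Real.sqrt_nonneg _)
      _ = Real.sqrt (γ ^ 2 * α ^ 2 * μ * ε / 32 * (2 * Δ₀ / μ)) :=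
          (Real.sqrt_mul (by positivity) _).symm
      _ = γ * α / 4 * Real.sqrt (ε * Δ₀) := by
          have he : γ ^ 2 * α ^ 2 * μ * ε / 32 * (2 * Δ₀ / μ) = (γ * α / 4) ^ 2 * (ε * Δ₀) := by
            field_simp; ring
          rw [he, Real.sqrt_mul (sq_nonneg _), Real.sqrt_sq (by positivity)]
  -- T bounds
  have h1α : (0:ℝ) < 1 - α := by linarith
  have hs : (0:ℝ) < Real.sqrt (L / μ) := Real.sqrt_pos.2 (by positivity)
  have hTreal : 8 / γ * Real.sqrt (L / μ) * Real.sqrt (1 + α) / (1 - α) ≤ (T:ℝ) := by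
    rw [hT]; exact Nat.le_ceil _
  have hsqrt1α : 1 ≤ Real.sqrt (1 + α) := by
    have h := Real.sqrt_le_sqrt (show (1:ℝ) ≤ 1 + α by linarith)
    rwa [Real.sqrt_one] at h
  have hTpos' : (0:ℝ) < 8 / γ * Real.sqrt (L / μ) * Real.sqrt (1 + α) / (1 - α) :=
    div_pos (mul_pos (mul_pos (div_pos (by norm_num) hγ0) hs)
      (Real.sqrt_pos.2 (by linarith))) h1α
  have hT1 : 1 ≤ T := by
    rw [hT]; exact Nat.ceil_pos.mpr hTpos'
  have hTpos : (0:ℝ) < (T:ℝ) := by exact_mod_cast Nat.lt_of_lt_of_le Nat.zero_lt_one hT1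
  -- 8 √(L/μ) ≤ (1-α) γ T
  have hTc : 8 * Real.sqrt (L / μ) ≤ (1 - α) * γ * (T:ℝ) := by
    have h2 : 8 / γ * Real.sqrt (L / μ) / (1 - α)
        ≤ 8 / γ * Real.sqrt (L / μ) * Real.sqrt (1 + α) / (1 - α) := by
      have hXnn : (0:ℝ) ≤ 8 / γ * Real.sqrt (L / μ) := by positivity
      exact div_le_div_of_nonneg_right (le_mul_of_one_le_right hXnn hsqrt1α) h1α.le
    have h3 := h2.trans hTreal
    rw [div_le_iff₀ h1α] at h3
    have h4 := mul_le_mul_of_nonneg_left h3 hγ0.le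
    calc 8 * Real.sqrt (L / μ) = γ * (8 / γ * Real.sqrt (L / μ)) := by field_simp [hγ0.ne']
      _ ≤ γ * ((T:ℝ) * (1 - α)) := h4
      _ = (1 - α) * γ * (T:ℝ) := by ring
  -- final combination
  have main2 : γ * ((T:ℝ) * ΔT) ≤ 4 * Δ₀ * Real.sqrt (L / μ)
      + γ * α * (T:ℝ) / 2 * Real.sqrt (ε * Δ₀) := by
    have hQTnn : (0:ℝ) ≤ Real.sqrt (8 * L * Δ₀) + (T:ℝ) * δ₁ := by positivity
    have c1 : ‖Q T‖ * R ≤ (Real.sqrt (8 * L * Δ₀) + (T:ℝ) * δ₁) * R :=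
      mul_le_mul_of_nonneg_right hQT hRnn
    have c2 : γ * ((T:ℝ) * ΔT) ≤ (Real.sqrt (8 * L * Δ₀) + 2 * (T:ℝ) * δ₁) * R := by
      have := hsum; nlinarith
    have c3 : (Real.sqrt (8 * L * Δ₀) + 2 * (T:ℝ) * δ₁) * R
        ≤ (Real.sqrt (8 * L * Δ₀) + 2 * (T:ℝ) * δ₁) * Real.sqrt (2 * Δ₀ / μ) := by
      apply mul_le_mul_of_nonneg_left hR
      positivity
    have c4 : (Real.sqrt (8 * L * Δ₀) + 2 * (T:ℝ) * δ₁) * Real.sqrt (2 * Δ₀ / μ)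
        = 4 * Δ₀ * Real.sqrt (L / μ) + 2 * (T:ℝ) * (δ₁ * Real.sqrt (2 * Δ₀ / μ)) := by
      rw [add_mul, hsqrtprod]; ring
    have c5 : 2 * (T:ℝ) * (δ₁ * Real.sqrt (2 * Δ₀ / μ))
        ≤ 2 * (T:ℝ) * (γ * α / 4 * Real.sqrt (ε * Δ₀)) := by
      apply mul_le_mul_of_nonneg_left hδprod
      positivity
    have c6 : 2 * (T:ℝ) * (γ * α / 4 * Real.sqrt (ε * Δ₀))
        = γ * α * (T:ℝ) / 2 * Real.sqrt (ε * Δ₀) := by ring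
    calc γ * ((T:ℝ) * ΔT) ≤ (Real.sqrt (8 * L * Δ₀) + 2 * (T:ℝ) * δ₁) * R := c2
      _ ≤ (Real.sqrt (8 * L * Δ₀) + 2 * (T:ℝ) * δ₁) * Real.sqrt (2 * Δ₀ / μ) := c3
      _ = 4 * Δ₀ * Real.sqrt (L / μ) + 2 * (T:ℝ) * (δ₁ * Real.sqrt (2 * Δ₀ / μ)) := c4
      _ ≤ 4 * Δ₀ * Real.sqrt (L / μ) + γ * α * (T:ℝ) / 2 * Real.sqrt (ε * Δ₀) := by linarith
  have h9 : 8 * Real.sqrt (L / μ) * Δ₀ ≤ (1 - α) * γ * (T:ℝ) * Δ₀ :=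
    mul_le_mul_of_nonneg_right hTc hΔ₀
  have hγT : (0:ℝ) < γ * (T:ℝ) := mul_pos hγ0 hTpos
  rw [← mul_le_mul_iff_right₀ hγT]
  have hexp : γ * (T:ℝ) * ((1 - α) / 2 * Δ₀ + α / 2 * Real.sqrt (ε * Δ₀))
      = (1 - α) * γ * (T:ℝ) * Δ₀ / 2 + γ * α * (T:ℝ) / 2 * Real.sqrt (ε * Δ₀) := by ring
  have hlhs : γ * (T:ℝ) * ΔT = γ * ((T:ℝ) * ΔT) := by ring
  rw [hexp, hlhs]
  linarith

set_option maxHeartbeats 2000000 in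
/-- Convergence of the restarted Nemirovski Conjugate Gradient method with a
δ₁-inexact gradient. `x j`, `xhat j`, `q j` are the iterates of the `j`-th restart,
started from `y j` (with `q j 0 = 0` standing for `q_{-1} = 0`), and
`y (j+1) = x j T` is the output of the `j`-th restart. -/
theorem cg_restarts_convergence (n : ℕ) (f : EuclideanSpace ℝ (Fin n) → ℝ)
    (L γ μ δ₁ α ε : ℝ) (hL : 0 < L) (hγ0 : 0 < γ) (hγ1 : γ ≤ 1) (hμ : 0 < μ)
    (hδ₁ : 0 ≤ δ₁) (hα0 : 0 < α) (hα1 : α < 1)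
    (hf : Differentiable ℝ f)
    (hsmooth : ∀ x y, ‖gradient f x - gradient f y‖ ≤ L * ‖x - y‖)
    (xstar : EuclideanSpace ℝ (Fin n)) (hmin : ∀ x, f xstar ≤ f x)
    (hquasar : ∀ x, f x + (1 / γ) * ⟪gradient f x, xstar - x⟫ ≤ f xstar)
    (hgrowth : ∀ x, μ / 2 * ‖x - xstar‖ ^ 2 ≤ f x - f xstar)
    (g : EuclideanSpace ℝ (Fin n) → EuclideanSpace ℝ (Fin n))
    (hg : ∀ x, ‖g x - gradient f x‖ ≤ δ₁)
    (x₀ : EuclideanSpace ℝ (Fin n))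
    (hgap : f x₀ - f xstar ≤ 1)
    (hε0 : 0 < ε) (hε1 : ε ≤ f x₀ - f xstar)
    (hδε : δ₁ ^ 2 ≤ γ ^ 2 * α ^ 2 * μ * ε / 32)
    (T K : ℕ)
    (hT : T = ⌈(8 / γ) * Real.sqrt (L / μ) * Real.sqrt (1 + α) / (1 - α)⌉₊)
    (hK : K = ⌈(2 / (1 - α)) * Real.log (1 / ε)⌉₊)
    (y : ℕ → EuclideanSpace ℝ (Fin n)) (hy0 : y 0 = x₀)
    (x xhat q : ℕ → ℕ → EuclideanSpace ℝ (Fin n))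
    (hx0 : ∀ j, x j 0 = y j)
    (hq0 : ∀ j, q j 0 = 0)
    (hqs : ∀ j k, q j (k + 1) = q j k + g (xhat j k))
    (hxhat_mem : ∀ j k, ∃ a b : ℝ, xhat j k = x j 0 + a • (x j k - x j 0) + b • q j k)
    (hxhat_min : ∀ j k, ∀ a b : ℝ,
      f (xhat j k) ≤ f (x j 0 + a • (x j k - x j 0) + b • q j k))
    (hxs : ∀ j k, x j (k + 1) = xhat j k - (1 / (2 * L)) • g (xhat j k))
    (hbig : ∀ j k, 2 * δ₁ ≤ ‖g (xhat j k)‖)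
    (hrestart : ∀ j, y (j + 1) = x j T) :
    f (y K) - f xstar ≤ ε := by
  have hcontr : ∀ j, f (y (j + 1)) - f xstar ≤ (1 - α) / 2 * (f (y j) - f xstar)
      + α / 2 * Real.sqrt (ε * (f (y j) - f xstar)) := by
    intro j
    have h := run_lemma f L γ μ δ₁ α ε hL hγ0 hμ hδ₁ hα0 hα1 hf hsmooth xstar hmin hquasar
      hgrowth g hg hε0 hδε T hT (x j) (xhat j) (q j) (hq0 j) (hqs j) (hxhat_mem j)
      (hxhat_min j) (hxs j) (hbig j)
    rw [hrestart j, ← hx0 j]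
    exact h
  have hnn : ∀ j, 0 ≤ f (y j) - f xstar := fun j => sub_nonneg.2 (hmin _)
  have hε1' : ε ≤ 1 := le_trans hε1 hgap
  have hind : ∀ j, f (y j) - f xstar ≤ max ε ((1 / 2) ^ j * (f x₀ - f xstar)) := by
    intro j
    induction j with
    | zero =>
      apply le_max_of_le_right
      rw [hy0]; simp
    | succ j ih =>
      rcases le_or_gt (f (y j) - f xstar) ε with h | h
      · have hsle : Real.sqrt (ε * (f (y j) - f xstar)) ≤ ε := by
          have h1 : ε * (f (y j) - f xstar) ≤ ε ^ 2 := by nlinarith [hnn j]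
          calc Real.sqrt (ε * (f (y j) - f xstar)) ≤ Real.sqrt (ε ^ 2) := Real.sqrt_le_sqrt h1
            _ = ε := Real.sqrt_sq hε0.le
        have h2 := hcontr j
        apply le_max_of_le_left
        nlinarith [hnn j]
      · have hle : f (y j) - f xstar ≤ (1 / 2) ^ j * (f x₀ - f xstar) := by
          rcases le_max_iff.mp ih with h' | h'
          · linarith
          · exact h'
        have hsle : Real.sqrt (ε * (f (y j) - f xstar)) ≤ f (y j) - f xstar := by
          have h1 : ε * (f (y j) - f xstar) ≤ (f (y j) - f xstar) ^ 2 := by nlinarith [hnn j]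
          calc Real.sqrt (ε * (f (y j) - f xstar))
              ≤ Real.sqrt ((f (y j) - f xstar) ^ 2) := Real.sqrt_le_sqrt h1
            _ = f (y j) - f xstar := Real.sqrt_sq (hnn j)
        have h2 := hcontr j
        apply le_max_of_le_right
        have h3 : f (y (j + 1)) - f xstar ≤ 1 / 2 * (f (y j) - f xstar) := by nlinarith
        calc f (y (j + 1)) - f xstar ≤ 1 / 2 * (f (y j) - f xstar) := h3
          _ ≤ 1 / 2 * ((1 / 2) ^ j * (f x₀ - f xstar)) := by linarith
          _ = (1 / 2) ^ (j + 1) * (f x₀ - f xstar) := by ring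
  have hKpow : (1 / 2 : ℝ) ^ K ≤ ε := by
    have h1 : 2 / (1 - α) * Real.log (1 / ε) ≤ (K:ℝ) := hK ▸ Nat.le_ceil _
    have h2 : 0 ≤ Real.log (1 / ε) := Real.log_nonneg (one_le_one_div hε0 hε1')
    have h1α : (0:ℝ) < 1 - α := by linarith
    have h3 : 2 * Real.log (1 / ε) ≤ 2 / (1 - α) * Real.log (1 / ε) := by
      apply mul_le_mul_of_nonneg_right _ h2
      rw [le_div_iff₀ h1α]; nlinarith
    have h4 : 2 * Real.log (1 / ε) ≤ (K:ℝ) := le_trans h3 h1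
    have hlog2 : (0.6931471803:ℝ) < Real.log 2 := Real.log_two_gt_d9
    have hlog : Real.log (1 / ε) ≤ (K:ℝ) * Real.log 2 := by nlinarith
    have hpow : Real.log ((1 / 2 : ℝ) ^ K) = -((K:ℝ) * Real.log 2) := by
      rw [Real.log_pow, one_div, Real.log_inv]; push_cast; ring
    have hloge : Real.log (1 / ε) = -Real.log ε := by rw [one_div, Real.log_inv]
    have h5 : Real.log ((1 / 2 : ℝ) ^ K) ≤ Real.log ε := by
      rw [hpow]; linarith
    exact (Real.log_le_log_iff (by positivity) hε0).mp h5
  have h6 := hind K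
  have h7 : (1 / 2 : ℝ) ^ K * (f x₀ - f xstar) ≤ (1 / 2 : ℝ) ^ K := by
    nlinarith [pow_nonneg (by norm_num : (0:ℝ) ≤ 1 / 2) K]
  rcases le_max_iff.mp h6 with h | h
  · exact h
  · linarith
end
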